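/- arXiv:2203.14848 — 11 statements merged into one kernel-verified Lean document; each statement's English description precedes it below -/
import Mathlib

section
/- For every α ∈ (0,1) and every β > 0, the dispersion function 𝒟(k) = (α + βk²)·sinh(k) − k·cosh(k) has exactly one root k⋆ in (0,∞), and this root is simple in the sense that the derivative 𝒟′(k⋆) is nonzero (in fact 𝒟′(k⋆) > 0). -/
open Real

/-- Helper: a differentiable function vanishing at 0 with nonnegative derivative
on `[0,∞)` is nonnegative there. -/
lemma nonneg_of_deriv (f f' : ℝ → ℝ) (hf : ∀ x, HasDerivAt f (f' x) x)
    (h0 : f 0 = 0) (hf' : ∀ x, 0 ≤ x → 0 ≤ f' x) : ∀ t, 0 ≤ t → 0 ≤ f t := by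
  have hmono : MonotoneOn f (Set.Ici (0:ℝ)) := by
    apply monotoneOn_of_deriv_nonneg (convex_Ici 0)
    · exact fun x _ => (hf x).continuousAt.continuousWithinAt
    · exact fun x _ => ((hf x).differentiableAt).differentiableWithinAt
    · intro x hx
      rw [(hf x).deriv]
      exact hf' x (le_of_lt (by simpa using hx))
  intro t ht
  calc (0:ℝ) = f 0 := h0.symm
    _ ≤ f t := hmono (Set.mem_Ici.mpr (le_refl 0)) ht ht

lemma h3_nonneg : ∀ t, 0 ≤ t → 0 ≤ t * Real.cosh t - Real.sinh t := by
  apply nonneg_of_deriv _ (fun t => t * Real.sinh t)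
  · intro x
    have h : HasDerivAt (fun t : ℝ => t * Real.cosh t - Real.sinh t)
        (1 * Real.cosh x + x * Real.sinh x - Real.cosh x) x :=
      ((hasDerivAt_id x).mul (Real.hasDerivAt_cosh x)).sub (Real.hasDerivAt_sinh x)
    convert h using 1; ring
  · simp
  · intro x hx; exact mul_nonneg hx (Real.sinh_nonneg_iff.mpr hx)

lemma h2_nonneg : ∀ t, 0 ≤ t → 0 ≤ t * Real.sinh t - 2 * Real.cosh t + 2 := by
  apply nonneg_of_deriv _ (fun t => t * Real.cosh t - Real.sinh t)
  · intro x
    have h : HasDerivAt (fun t : ℝ => t * Real.sinh t - 2 * Real.cosh t + 2)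
        (1 * Real.sinh x + x * Real.cosh x - 2 * Real.sinh x) x :=
      (((hasDerivAt_id x).mul (Real.hasDerivAt_sinh x)).sub
        ((Real.hasDerivAt_cosh x).const_mul 2)).add_const 2
    convert h using 1; ring
  · simp
  · exact h3_nonneg

lemma h1_nonneg : ∀ t, 0 ≤ t → 0 ≤ t * Real.cosh t - 3 * Real.sinh t + 2 * t := by
  apply nonneg_of_deriv _ (fun t => t * Real.sinh t - 2 * Real.cosh t + 2)
  · intro x
    have h : HasDerivAt (fun t : ℝ => t * Real.cosh t - 3 * Real.sinh t + 2 * t)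
        (1 * Real.cosh x + x * Real.sinh x - 3 * Real.cosh x + 2 * 1) x :=
      (((hasDerivAt_id x).mul (Real.hasDerivAt_cosh x)).sub
        ((Real.hasDerivAt_sinh x).const_mul 3)).add ((hasDerivAt_id x).const_mul 2)
    convert h using 1; ring
  · simp
  · exact h2_nonneg

lemma h0_nonneg : ∀ t, 0 ≤ t → 0 ≤ t * Real.sinh t - 4 * Real.cosh t + t ^ 2 + 4 := by
  apply nonneg_of_deriv _ (fun t => t * Real.cosh t - 3 * Real.sinh t + 2 * t)
  · intro x
    have h : HasDerivAt (fun t : ℝ => t * Real.sinh t - 4 * Real.cosh t + t ^ 2 + 4)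
        (1 * Real.sinh x + x * Real.cosh x - 4 * Real.sinh x + 2 * x) x := by
      have hp : HasDerivAt (fun t : ℝ => t ^ 2) (2 * x) x := by
        simpa using (hasDerivAt_pow 2 x)
      exact ((((hasDerivAt_id x).mul (Real.hasDerivAt_sinh x)).sub
        ((Real.hasDerivAt_cosh x).const_mul 4)).add hp).add_const 4
    convert h using 1; ring
  · simp
  · exact h1_nonneg

/-- The key hyperbolic inequality: `2 sinh²k ≤ k sinh k cosh k + k²`. -/
lemma key_ineq (k : ℝ) (hk : 0 ≤ k) :
    2 * Real.sinh k ^ 2 ≤ k * Real.sinh k * Real.cosh k + k ^ 2 := by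
  have h := h0_nonneg (2 * k) (by linarith)
  rw [Real.sinh_two_mul, Real.cosh_two_mul] at h
  have hc := Real.cosh_sq_sub_sinh_sq k
  nlinarith [h, hc]

/-- The linear dispersion function `𝒟(k) = (α + βk²)·sinh(k) − k·cosh(k)`. -/
noncomputable def disp (α β k : ℝ) : ℝ :=
  (α + β * k ^ 2) * Real.sinh k - k * Real.cosh k

/-- The auxiliary function `ρ(k) = (k cosh k − α sinh k)/(k² sinh k)`. -/
noncomputable def rho (α k : ℝ) : ℝ :=
  (k * Real.cosh k - α * Real.sinh k) / (k ^ 2 * Real.sinh k)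

lemma disp_eq_rho (α β k : ℝ) (hk : k ≠ 0) (hs : Real.sinh k ≠ 0) :
    disp α β k = k ^ 2 * Real.sinh k * (β - rho α k) := by
  unfold disp rho
  field_simp
  ring

lemma rho_hasDerivAt (α k : ℝ) (hk : 0 < k) :
    HasDerivAt (rho α)
      (k * (2 * α * Real.sinh k ^ 2 - k * Real.sinh k * Real.cosh k - k ^ 2)
        / (k ^ 2 * Real.sinh k) ^ 2) k := by
  have hs : Real.sinh k ≠ 0 := ne_of_gt (Real.sinh_pos_iff.mpr hk)
  have hM : k ^ 2 * Real.sinh k ≠ 0 := by positivity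
  have hN : HasDerivAt (fun k : ℝ => k * Real.cosh k - α * Real.sinh k)
      (1 * Real.cosh k + k * Real.sinh k - α * Real.cosh k) k :=
    ((hasDerivAt_id k).mul (Real.hasDerivAt_cosh k)).sub
      ((Real.hasDerivAt_sinh k).const_mul α)
  have hMd : HasDerivAt (fun k : ℝ => k ^ 2 * Real.sinh k)
      (2 * k * Real.sinh k + k ^ 2 * Real.cosh k) k := by
    have hp : HasDerivAt (fun t : ℝ => t ^ 2) (2 * k) k := by
      simpa using (hasDerivAt_pow 2 k)
    have := hp.mul (Real.hasDerivAt_sinh k)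
    exact this
  have h := hN.div hMd hM
  refine h.congr_deriv (Eq.symm ?_)
  rw [div_eq_div_iff (by positivity) (by positivity)]
  have hc := Real.cosh_sq_sub_sinh_sq k
  linear_combination ((k ^ 2 * Real.sinh k) ^ 2 * k ^ 3) * hc

lemma rho_strictAnti (α : ℝ) (hα0 : 0 < α) (hα1 : α < 1) :
    StrictAntiOn (rho α) (Set.Ioi 0) := by
  apply strictAntiOn_of_deriv_neg (convex_Ioi 0)
  · intro x hx
    exact (rho_hasDerivAt α x hx).continuousAt.continuousWithinAt
  · intro x hx
    rw [interior_Ioi] at hx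
    have hx' : (0:ℝ) < x := hx
    rw [(rho_hasDerivAt α x hx').deriv]
    have hs : 0 < Real.sinh x := Real.sinh_pos_iff.mpr hx'
    have hkey := key_ineq x hx'.le
    have hnum : x * (2 * α * Real.sinh x ^ 2 - x * Real.sinh x * Real.cosh x - x ^ 2) < 0 := by
      have hs2 : 0 < Real.sinh x ^ 2 := pow_pos hs 2
      have h1 : 2 * α * Real.sinh x ^ 2 < 2 * Real.sinh x ^ 2 := by nlinarith
      nlinarith
    have hden : (0:ℝ) < (x ^ 2 * Real.sinh x) ^ 2 := by positivity
    exact div_neg_of_neg_of_pos hnum hden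

/-- In Region I (`0 < α < 1`, `β > 0`) the dispersion relation has exactly one positive
root, and this root is simple with `𝒟′(k⋆) > 0`. -/
theorem stmt_0 (α β : ℝ) (hα0 : 0 < α) (hα1 : α < 1) (hβ : 0 < β) :
    ∃ kstar : ℝ, 0 < kstar ∧ disp α β kstar = 0 ∧
      (∀ k : ℝ, 0 < k → disp α β k = 0 → k = kstar) ∧
      0 < deriv (disp α β) kstar := by
  -- Continuity of disp
  have hderiv : ∀ k : ℝ, HasDerivAt (disp α β)
      (2 * β * k * Real.sinh k + (α + β * k ^ 2) * Real.cosh k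
        - Real.cosh k - k * Real.sinh k) k := by
    intro k
    have hp : HasDerivAt (fun t : ℝ => α + β * t ^ 2) (β * (2 * k)) k := by
      have h2 : HasDerivAt (fun t : ℝ => t ^ 2) (2 * k) k := by
        simpa using (hasDerivAt_pow 2 k)
      exact (h2.const_mul β).const_add α
    have h : HasDerivAt (disp α β)
        (β * (2 * k) * Real.sinh k + (α + β * k ^ 2) * Real.cosh k
          - (1 * Real.cosh k + k * Real.sinh k)) k :=
      (hp.mul (Real.hasDerivAt_sinh k)).sub ((hasDerivAt_id k).mul (Real.hasDerivAt_cosh k))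
    convert h using 1; ring
  have hcont : Continuous (disp α β) := by
    exact continuous_iff_continuousAt.mpr fun x => (hderiv x).differentiableAt.continuousAt
  -- negative at small a
  set b : ℝ := max (2 / β) 2 with hb_def
  have hb2 : (2:ℝ) ≤ b := le_max_right _ _
  have hb0 : (0:ℝ) < b := by linarith
  set a : ℝ := min (Real.sqrt ((1 - α) / (2 * β))) (b / 2) with ha_def
  have hfrac : (0:ℝ) < (1 - α) / (2 * β) := div_pos (by linarith) (by linarith)
  have hsq_pos : 0 < Real.sqrt ((1 - α) / (2 * β)) := Real.sqrt_pos.mpr hfrac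
  have ha0 : 0 < a := lt_min hsq_pos (by linarith)
  have hab : a < b := lt_of_le_of_lt (min_le_right _ _) (by linarith)
  have ha_lt : β * a ^ 2 < 1 - α := by
    have h1 : a ≤ Real.sqrt ((1 - α) / (2 * β)) := min_le_left _ _
    have h2 : a ^ 2 ≤ (1 - α) / (2 * β) := by
      have := Real.sq_sqrt hfrac.le
      nlinarith [sq_nonneg a, ha0.le]
    have h3 : β * a ^ 2 ≤ (1 - α) / 2 := by
      calc β * a ^ 2 ≤ β * ((1 - α) / (2 * β)) := by nlinarith
        _ = (1 - α) / 2 := by field_simp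
    linarith
  have hDa : disp α β a < 0 := by
    have hs : 0 < Real.sinh a := Real.sinh_pos_iff.mpr ha0
    have hc : 0 < Real.cosh a := Real.cosh_pos a
    have h3 := h3_nonneg a ha0.le  -- sinh a ≤ a cosh a
    unfold disp
    have h4 : (α + β * a ^ 2) * Real.sinh a ≤ (α + β * a ^ 2) * (a * Real.cosh a) := by
      apply mul_le_mul_of_nonneg_left (by linarith) (by nlinarith)
    have h5 : (α + β * a ^ 2) * (a * Real.cosh a) < a * Real.cosh a := by
      nlinarith
    linarith
  -- positive at b
  have hDb : 0 < disp α β b := by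
    have hs : b ≤ Real.sinh b := by
      have := Real.self_lt_sinh_iff.mpr hb0
      linarith
    have hcs : Real.cosh b ≤ Real.sinh b + 1 := by
      have h1 : Real.cosh b - Real.sinh b = Real.exp (-b) := by
        rw [Real.cosh_eq, Real.sinh_eq]; ring
      have h2 : Real.exp (-b) ≤ 1 := Real.exp_le_one_iff.mpr (by linarith)
      linarith
    have hbb : 2 ≤ β * b := by
      have : 2 / β ≤ b := le_max_left _ _
      calc (2:ℝ) = β * (2 / β) := by field_simp
        _ ≤ β * b := by nlinarith
    have hs0 : 0 < Real.sinh b := Real.sinh_pos_iff.mpr hb0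
    unfold disp
    have h6 : b ≤ β * b ^ 2 - b := by nlinarith
    have e1 : b * Real.cosh b ≤ b * (Real.sinh b + 1) :=
      mul_le_mul_of_nonneg_left hcs hb0.le
    have e2 : b * Real.sinh b ≤ (β * b ^ 2 - b) * Real.sinh b :=
      mul_le_mul_of_nonneg_right h6 hs0.le
    have e3 : b * b ≤ b * Real.sinh b := mul_le_mul_of_nonneg_left hs hb0.le
    have e4 : 0 < α * Real.sinh b := mul_pos hα0 hs0
    nlinarith [e1, e2, e3, e4]
  -- IVT
  obtain ⟨kstar, hks_mem, hks_root⟩ : ∃ k ∈ Set.Ioo a b, disp α β k = 0 := by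
    have h := intermediate_value_Ioo hab.le (hcont.continuousOn (s := Set.Icc a b))
    have h0 : (0:ℝ) ∈ Set.Ioo (disp α β a) (disp α β b) := ⟨hDa, hDb⟩
    obtain ⟨k, hk, hk0⟩ := h h0
    exact ⟨k, hk, hk0⟩
  have hks0 : 0 < kstar := lt_trans ha0 hks_mem.1
  -- root of rho
  have hrho_root : ∀ k : ℝ, 0 < k → disp α β k = 0 → rho α k = β := by
    intro k hk hdk
    have hs : Real.sinh k ≠ 0 := ne_of_gt (Real.sinh_pos_iff.mpr hk)
    have := disp_eq_rho α β k (ne_of_gt hk) hs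
    rw [hdk] at this
    have hne : k ^ 2 * Real.sinh k ≠ 0 := by positivity
    have : β - rho α k = 0 := by
      by_contra hc
      exact (mul_ne_zero hne hc) this.symm
    linarith
  refine ⟨kstar, hks0, hks_root, ?_, ?_⟩
  · -- uniqueness
    intro k hk hdk
    have h1 := hrho_root k hk hdk
    have h2 := hrho_root kstar hks0 hks_root
    have := (rho_strictAnti α hα0 hα1).injOn (Set.mem_Ioi.mpr hk) (Set.mem_Ioi.mpr hks0)
    exact this (by rw [h1, h2])
  · -- derivative positive at root
    rw [(hderiv kstar).deriv]
    have hs : 0 < Real.sinh kstar := Real.sinh_pos_iff.mpr hks0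
    have hroot : (α + β * kstar ^ 2) * Real.sinh kstar - kstar * Real.cosh kstar = 0 :=
      hks_root
    have hc2 : Real.cosh kstar ^ 2 - Real.sinh kstar ^ 2 = 1 :=
      Real.cosh_sq_sub_sinh_sq kstar
    have hkey := key_ineq kstar hks0.le
    have hfact : kstar * Real.sinh kstar * (2 * β * kstar * Real.sinh kstar
          + (α + β * kstar ^ 2) * Real.cosh kstar - Real.cosh kstar
          - kstar * Real.sinh kstar)
        = kstar * Real.sinh kstar * Real.cosh kstar + kstar ^ 2
          - 2 * α * Real.sinh kstar ^ 2 := by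
      linear_combination (2 * Real.sinh kstar + kstar * Real.cosh kstar) * hroot
        + kstar ^ 2 * hc2
    have hs2 : 0 < Real.sinh kstar ^ 2 := pow_pos hs 2
    have h1 : 2 * α * Real.sinh kstar ^ 2 < 2 * Real.sinh kstar ^ 2 := by nlinarith
    have hpos : 0 < kstar * Real.sinh kstar * Real.cosh kstar + kstar ^ 2
        - 2 * α * Real.sinh kstar ^ 2 := by linarith
    by_contra hcon
    push_neg at hcon
    have hle : kstar * Real.sinh kstar * (2 * β * kstar * Real.sinh kstar
          + (α + β * kstar ^ 2) * Real.cosh kstar - Real.cosh kstar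
          - kstar * Real.sinh kstar) ≤ 0 :=
      mul_nonpos_of_nonneg_of_nonpos (mul_pos hks0 hs).le hcon
    linarith [hfact ▸ hle]
end

section
/- For α = 1 and every β with 0 < β < 1/3, the dispersion function 𝒟(k) = (1 + βk²)·sinh(k) − k·cosh(k) has exactly one root k⋆ in (0,∞), and this root is simple (𝒟′(k⋆) ≠ 0). -/
open Real

lemma my_aux_pos (f f' : ℝ → ℝ) (hd : ∀ x, HasDerivAt f (f' x) x) (h0 : f 0 = 0)
    (hp : ∀ x, 0 < x → 0 < f' x) {k : ℝ} (hk : 0 < k) : 0 < f k := by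
  have hdf : Differentiable ℝ f := fun x => (hd x).differentiableAt
  have hm : StrictMonoOn f (Set.Ici 0) := by
    apply strictMonoOn_of_deriv_pos (convex_Ici 0) hdf.continuous.continuousOn
    intro x hx
    rw [interior_Ici] at hx
    rw [(hd x).deriv]
    exact hp x hx
  have := hm Set.self_mem_Ici (Set.mem_Ici.mpr hk.le) hk
  rwa [h0] at this

lemma my_key {k : ℝ} (hk : 0 < k) :
    2 * Real.sinh k ^ 2 < k ^ 2 + k * Real.sinh k * Real.cosh k := by
  have hG3 : ∀ x : ℝ, 0 < x →
      0 < x * (Real.cosh x ^ 2 + Real.sinh x ^ 2) - Real.sinh x * Real.cosh x := by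
    intro x hx
    apply my_aux_pos (fun k => k * (Real.cosh k ^ 2 + Real.sinh k ^ 2) - Real.sinh k * Real.cosh k)
      (fun k => 4 * k * Real.sinh k * Real.cosh k) ?_ (by simp) ?_ hx
    · intro y
      have h := ((hasDerivAt_id y).mul (((Real.hasDerivAt_cosh y).pow 2).add
        ((Real.hasDerivAt_sinh y).pow 2))).sub
        ((Real.hasDerivAt_sinh y).mul (Real.hasDerivAt_cosh y))
      refine h.congr_deriv ?_
      simp only [id_eq, Pi.mul_apply, Pi.add_apply, Pi.pow_apply, Pi.sub_apply, id]
      push_cast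
      ring
    · intro y hy
      have h1 := Real.sinh_pos_iff.mpr hy
      have h2 := Real.cosh_pos (x := y)
      show 0 < 4 * y * Real.sinh y * Real.cosh y
      positivity
  have hG2 : ∀ x : ℝ, 0 < x →
      0 < 1 + 2 * x * Real.sinh x * Real.cosh x - Real.cosh x ^ 2 - Real.sinh x ^ 2 := by
    intro x hx
    apply my_aux_pos
      (fun k => 1 + 2 * k * Real.sinh k * Real.cosh k - Real.cosh k ^ 2 - Real.sinh k ^ 2)
      (fun k => 2 * (k * (Real.cosh k ^ 2 + Real.sinh k ^ 2) - Real.sinh k * Real.cosh k))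
      ?_ (by simp) ?_ hx
    · intro y
      have h := ((((hasDerivAt_const y (2:ℝ)).mul (hasDerivAt_id y)).mul
        (Real.hasDerivAt_sinh y)).mul (Real.hasDerivAt_cosh y))
      have h2 := (((hasDerivAt_const y (1:ℝ)).add h).sub
        ((Real.hasDerivAt_cosh y).pow 2)).sub ((Real.hasDerivAt_sinh y).pow 2)
      refine h2.congr_deriv ?_
      simp only [id_eq, Pi.mul_apply, Pi.add_apply, Pi.pow_apply, Pi.sub_apply, id]
      push_cast
      ring
    · intro y hy
      have := hG3 y hy
      show 0 < 2 * (y * (Real.cosh y ^ 2 + Real.sinh y ^ 2) - Real.sinh y * Real.cosh y)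
      linarith
  have hG1 : ∀ x : ℝ, 0 < x →
      0 < 2 * x + x * Real.cosh x ^ 2 + x * Real.sinh x ^ 2 - 3 * Real.sinh x * Real.cosh x := by
    intro x hx
    apply my_aux_pos
      (fun k => 2 * k + k * Real.cosh k ^ 2 + k * Real.sinh k ^ 2 - 3 * Real.sinh k * Real.cosh k)
      (fun k => 2 * (1 + 2 * k * Real.sinh k * Real.cosh k - Real.cosh k ^ 2 - Real.sinh k ^ 2))
      ?_ (by simp) ?_ hx
    · intro y
      have h := ((((hasDerivAt_const y (2:ℝ)).mul (hasDerivAt_id y)).add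
        ((hasDerivAt_id y).mul ((Real.hasDerivAt_cosh y).pow 2))).add
        ((hasDerivAt_id y).mul ((Real.hasDerivAt_sinh y).pow 2))).sub
        (((hasDerivAt_const y (3:ℝ)).mul (Real.hasDerivAt_sinh y)).mul (Real.hasDerivAt_cosh y))
      refine h.congr_deriv ?_
      simp only [id_eq, Pi.mul_apply, Pi.add_apply, Pi.pow_apply, Pi.sub_apply, id]
      push_cast
      ring
    · intro y hy
      have := hG2 y hy
      show 0 < 2 * (1 + 2 * y * Real.sinh y * Real.cosh y - Real.cosh y ^ 2 - Real.sinh y ^ 2)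
      linarith
  have hG0 : 0 < k ^ 2 + k * Real.sinh k * Real.cosh k - 2 * Real.sinh k ^ 2 := by
    apply my_aux_pos
      (fun k => k ^ 2 + k * Real.sinh k * Real.cosh k - 2 * Real.sinh k ^ 2)
      (fun k => 2 * k + k * Real.cosh k ^ 2 + k * Real.sinh k ^ 2
        - 3 * Real.sinh k * Real.cosh k) ?_ (by simp) hG1 hk
    intro y
    have h := (((hasDerivAt_pow 2 y).add
      (((hasDerivAt_id y).mul (Real.hasDerivAt_sinh y)).mul (Real.hasDerivAt_cosh y))).sub
      ((hasDerivAt_const y (2:ℝ)).mul ((Real.hasDerivAt_sinh y).pow 2)))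
    refine h.congr_deriv ?_
    simp only [id_eq, Pi.mul_apply, Pi.add_apply, Pi.pow_apply, Pi.sub_apply, id]
    push_cast
    ring
  linarith

/-- `sinh k < k cosh k` for `k > 0`. -/
lemma my_sinh_lt {k : ℝ} (hk : 0 < k) : Real.sinh k < k * Real.cosh k := by
  have := my_aux_pos (fun k => k * Real.cosh k - Real.sinh k) (fun k => k * Real.sinh k)
    (fun y => by
      have h := (((hasDerivAt_id y).mul (Real.hasDerivAt_cosh y)).sub (Real.hasDerivAt_sinh y))
      refine h.congr_deriv ?_
      simp only [id_eq]; ring) (by simp)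
    (fun y hy => by
      have := Real.sinh_pos_iff.mpr hy
      show 0 < y * Real.sinh y
      positivity) hk
  simpa [sub_pos] using this

/-- `k cosh k - sinh k > k³/3` for `k > 0`. -/
lemma my_cub {k : ℝ} (hk : 0 < k) : k ^ 3 / 3 < k * Real.cosh k - Real.sinh k := by
  have := my_aux_pos (fun k => k * Real.cosh k - Real.sinh k - k ^ 3 / 3)
    (fun k => k * (Real.sinh k - k))
    (fun y => by
      have h := ((((hasDerivAt_id y).mul (Real.hasDerivAt_cosh y)).sub
        (Real.hasDerivAt_sinh y)).sub ((hasDerivAt_pow 3 y).div_const 3))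
      refine h.congr_deriv ?_
      simp only [id_eq]; push_cast; ring) (by simp)
    (fun y hy => by
      have hsy := Real.self_lt_sinh_iff.mpr hy
      show 0 < y * (Real.sinh y - y)
      have : 0 < Real.sinh y - y := by linarith
      positivity) hk
  simp only [sub_pos] at this
  linarith [this]

/-- `cosh k * (1 - k²) < 1` for `k > 0`. -/
lemma my_cosh_bound {k : ℝ} (hk : 0 < k) : Real.cosh k * (1 - k ^ 2) < 1 := by
  have h1 : Real.cosh k - 1 < k * Real.sinh k := by
    have := my_aux_pos (fun k => k * Real.sinh k - Real.cosh k + 1) (fun k => k * Real.cosh k)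
      (fun y => by
        have h := ((((hasDerivAt_id y).mul (Real.hasDerivAt_sinh y)).sub
          (Real.hasDerivAt_cosh y)).add (hasDerivAt_const y (1:ℝ)))
        refine h.congr_deriv ?_
        simp only [id_eq]; ring) (by simp)
      (fun y hy => by
        have := Real.cosh_pos (x := y)
        show 0 < y * Real.cosh y
        positivity) hk
    linarith
  have h2 := my_sinh_lt hk
  nlinarith [hk]

noncomputable def myR (k : ℝ) : ℝ := (k * Real.cosh k - Real.sinh k) / (k ^ 2 * Real.sinh k)

lemma myR_hasDeriv {x : ℝ} (hx : 0 < x) :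
    HasDerivAt myR ((x * Real.sinh x * (x ^ 2 * Real.sinh x) -
      (x * Real.cosh x - Real.sinh x) * (2 * x * Real.sinh x + x ^ 2 * Real.cosh x)) /
      (x ^ 2 * Real.sinh x) ^ 2) x := by
  have hS := Real.sinh_pos_iff.mpr hx
  have hN : HasDerivAt (fun k => k * Real.cosh k - Real.sinh k) (x * Real.sinh x) x := by
    have h := ((hasDerivAt_id x).mul (Real.hasDerivAt_cosh x)).sub (Real.hasDerivAt_sinh x)
    refine h.congr_deriv ?_
    simp only [id_eq]; ring
  have hM : HasDerivAt (fun k => k ^ 2 * Real.sinh k)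
      (2 * x * Real.sinh x + x ^ 2 * Real.cosh x) x := by
    have h := (hasDerivAt_pow 2 x).mul (Real.hasDerivAt_sinh x)
    refine h.congr_deriv ?_
    push_cast; ring
  exact hN.div hM (by positivity)

lemma myR_anti : StrictAntiOn myR (Set.Ioi 0) := by
  apply strictAntiOn_of_deriv_neg (convex_Ioi 0)
  · exact fun x hx => ((myR_hasDeriv hx).differentiableAt.continuousAt).continuousWithinAt
  · intro x hx
    rw [interior_Ioi] at hx
    rw [(myR_hasDeriv hx).deriv]
    have hS := Real.sinh_pos_iff.mpr hx
    have hC := Real.cosh_pos (x := x)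
    have hkey := my_key hx
    apply div_neg_of_neg_of_pos
    · have hC2 := Real.cosh_sq_sub_sinh_sq x
      have hnum : x * Real.sinh x * (x ^ 2 * Real.sinh x) -
          (x * Real.cosh x - Real.sinh x) * (2 * x * Real.sinh x + x ^ 2 * Real.cosh x) =
          -(x * (x ^ 2 + x * Real.sinh x * Real.cosh x - 2 * Real.sinh x ^ 2)) := by
        linear_combination (-(x ^ 3)) * hC2
      rw [hnum, neg_lt_zero]
      have := Set.mem_Ioi.mp hx
      nlinarith
    · exact pow_pos (mul_pos (pow_pos (Set.mem_Ioi.mp hx) 2) hS) 2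

/-- For `α = 1` and `0 < β < 1/3` the dispersion relation has exactly one positive root,
and this root is simple. -/
theorem stmt_2 (β : ℝ) (hβ0 : 0 < β) (hβ1 : β < 1 / 3) :
    ∃ kstar : ℝ, 0 < kstar ∧ disp 1 β kstar = 0 ∧
      (∀ k : ℝ, 0 < k → disp 1 β k = 0 → k = kstar) ∧
      deriv (disp 1 β) kstar ≠ 0 := by
  have hDeq : disp 1 β = fun k => (1 + β * k ^ 2) * Real.sinh k - k * Real.cosh k := rfl
  have hDcont : Continuous (disp 1 β) := by
    rw [hDeq]; fun_prop
  -- lower endpoint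
  set k₁ : ℝ := Real.sqrt ((1 - 3 * β) / 2) with hk₁def
  have hk₁pos : 0 < k₁ := Real.sqrt_pos.mpr (by linarith)
  have hk₁sq : k₁ ^ 2 = (1 - 3 * β) / 2 := Real.sq_sqrt (by linarith)
  have hD1 : disp 1 β k₁ < 0 := by
    have f1 := my_cub hk₁pos
    have f2 := my_sinh_lt hk₁pos
    have f3 := my_cosh_bound hk₁pos
    have hS := Real.sinh_pos_iff.mpr hk₁pos
    have hC := Real.cosh_pos (x := k₁)
    rw [hk₁sq] at f3
    have h6 : Real.cosh k₁ * (1 + 3 * β) < 2 := by nlinarith [f3]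
    have h7 : 3 * β * Real.cosh k₁ < 1 := by nlinarith [Real.one_le_cosh k₁]
    have h8 : β * k₁ ^ 3 * Real.cosh k₁ < k₁ ^ 3 / 3 := by
      nlinarith [pow_pos hk₁pos 3]
    rw [hDeq]
    show (1 + β * k₁ ^ 2) * Real.sinh k₁ - k₁ * Real.cosh k₁ < 0
    nlinarith [f1, h8, mul_lt_mul_of_pos_left f2
      (show (0:ℝ) < β * k₁ ^ 2 from mul_pos hβ0 (pow_pos hk₁pos 2))]
  -- upper endpoint
  obtain ⟨k₂, hk₂def⟩ : ∃ x : ℝ, x = 3 / β + 3 := ⟨_, rfl⟩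
  have hk₂3 : (3:ℝ) < k₂ := by
    have : 0 < 3 / β := by positivity
    linarith
  have hk₂pos : 0 < k₂ := by linarith
  have hk₁lt : k₁ < k₂ := by
    have : k₁ < 1 := by nlinarith [hk₁sq, hk₁pos]
    linarith
  have hD2 : 0 < disp 1 β k₂ := by
    have hβk : β * k₂ = 3 + 3 * β := by
      rw [hk₂def]; field_simp
    have hCS : Real.cosh k₂ ≤ Real.sinh k₂ + 1 := by
      have h := Real.cosh_sub_sinh k₂
      have : Real.exp (-k₂) ≤ 1 := Real.exp_le_one_iff.mpr (by linarith)
      linarith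
    have hSk : k₂ < Real.sinh k₂ := Real.self_lt_sinh_iff.mpr hk₂pos
    rw [hDeq]
    show 0 < (1 + β * k₂ ^ 2) * Real.sinh k₂ - k₂ * Real.cosh k₂
    have hb2 : β * k₂ ^ 2 = (3 + 3 * β) * k₂ := by
      rw [← hβk]; ring
    nlinarith [hSk, hCS, hk₂pos, mul_lt_mul_of_pos_left hSk (show (0:ℝ) < 2 * k₂ by linarith)]
  -- existence via IVT
  obtain ⟨kstar, hmem, hroot⟩ := intermediate_value_Ioo hk₁lt.le hDcont.continuousOn
    (Set.mem_Ioo.mpr ⟨hD1, hD2⟩)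
  have hkpos : 0 < kstar := lt_trans hk₁pos hmem.1
  -- root implies R = β
  have hRroot : ∀ k : ℝ, 0 < k → disp 1 β k = 0 → myR k = β := by
    intro k hk h
    have hS := Real.sinh_pos_iff.mpr hk
    have h' : (1 + β * k ^ 2) * Real.sinh k - k * Real.cosh k = 0 := h
    have hnum : k * Real.cosh k - Real.sinh k = β * (k ^ 2 * Real.sinh k) := by linarith [h']; 
    unfold myR
    rw [hnum]
    field_simp
  refine ⟨kstar, hkpos, hroot, ?_, ?_⟩
  · intro k hk h
    exact myR_anti.injOn (Set.mem_Ioi.mpr hk) (Set.mem_Ioi.mpr hkpos)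
      (by rw [hRroot k hk h, hRroot kstar hkpos hroot])
  · -- simplicity
    have hd : HasDerivAt (disp 1 β)
        (2 * β * kstar * Real.sinh kstar + (1 + β * kstar ^ 2) * Real.cosh kstar
          - (Real.cosh kstar + kstar * Real.sinh kstar)) kstar := by
      rw [hDeq]
      have h := (((hasDerivAt_const kstar (1:ℝ)).add
        ((hasDerivAt_const kstar β).mul (hasDerivAt_pow 2 kstar))).mul
        (Real.hasDerivAt_sinh kstar)).sub
        ((hasDerivAt_id kstar).mul (Real.hasDerivAt_cosh kstar))
      refine h.congr_deriv ?_
      simp only [id_eq, Pi.mul_apply, Pi.add_apply, Pi.pow_apply, Pi.sub_apply, id]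
      push_cast
      ring
    intro h0
    rw [hd.deriv] at h0
    set k := kstar
    set S := Real.sinh k with hSdef
    set C := Real.cosh k with hCdef
    have hC2 : C ^ 2 - S ^ 2 = 1 := Real.cosh_sq_sub_sinh_sq k
    have hkey := my_key hkpos
    have hroot' : (1 + β * k ^ 2) * S - k * C = 0 := hroot
    have e1' : 2 * β * k * S + β * k ^ 2 * C - k * S = 0 := by linear_combination h0
    have h3 : k * ((k * C - S) * (2 * S + k * C)) = k ^ 3 * S ^ 2 := by
      linear_combination (-(k * (2 * S + k * C))) * hroot' + (k ^ 2 * S) * e1'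
    have h4 : k * (k * S * C + k ^ 2 - 2 * S ^ 2) = 0 := by
      linear_combination h3 - k ^ 3 * hC2
    have h5 : k * S * C + k ^ 2 - 2 * S ^ 2 = 0 :=
      (mul_eq_zero.mp h4).resolve_left (ne_of_gt hkpos)
    rw [hSdef, hCdef] at h5
    linarith [hkey, h5]
end

section
/- For every s > 0, set α(s) = s²/(2 sinh²(s)) + s/(2 tanh(s)) and β(s) = −1/(2 sinh²(s)) + 1/(2 s tanh(s)), and let 𝒟(k) = (α(s) + β(s)k²)·sinh(k) − k·cosh(k). Then 𝒟(s) = 0 and 𝒟′(s) = 0, and s is the only root of 𝒟 in (0,∞); that is, on the curve Γ the dispersion relation has exactly one positive root, which is a double root. -/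
open Real Set

/-- If `f 0 = 0` and `f' > 0` on `(0,∞)`, then `f > 0` on `(0,∞)`. -/
lemma aux_pos_of_deriv (f f' : ℝ → ℝ) (hf : ∀ x, HasDerivAt f (f' x) x)
    (h0 : f 0 = 0) (hpos : ∀ x, 0 < x → 0 < f' x) :
    ∀ x, 0 < x → 0 < f x := by
  intro x hx
  have hmono : StrictMonoOn f (Set.Ici 0) := by
    apply strictMonoOn_of_deriv_pos (convex_Ici 0)
    · exact fun y _ => (hf y).continuousAt.continuousWithinAt
    · intro y hy
      rw [interior_Ici] at hy
      rw [(hf y).deriv]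
      exact hpos y hy
  have := hmono (Set.self_mem_Ici) (le_of_lt hx : (0:ℝ) ≤ x) hx
  rwa [h0] at this

private lemma hd3 (x : ℝ) : HasDerivAt (fun y : ℝ => (3:ℝ) * y) 3 x := by
  simpa using (hasDerivAt_id' x).const_mul (3:ℝ)

/-- `E(k) = sinh²k·cosh k + k·sinh k − 2k²·cosh k > 0` for `k > 0`. -/
lemma E_pos : ∀ k : ℝ, 0 < k →
    0 < Real.sinh k ^ 2 * Real.cosh k + k * Real.sinh k - 2 * k ^ 2 * Real.cosh k := by
  -- the cascade of derivatives of E written with cosh(3k)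
  have h6 : ∀ x : ℝ, 0 < x →
      0 < (729 * Real.cosh (3*x) - 217 * Real.cosh x) / 4
          - 23 * x * Real.sinh x - 2 * x ^ 2 * Real.cosh x := by
    intro x hx
    have h3 := Real.cosh_three_mul x
    have hsq := Real.cosh_sq x
    have h1 : (1:ℝ) ≤ Real.cosh x := Real.one_le_cosh x
    have h2 : x ≤ Real.sinh x := Real.self_le_sinh_iff.mpr hx.le
    have h4 : Real.sinh x < Real.cosh x := Real.sinh_lt_cosh x
    have h5 : (0:ℝ) < Real.sinh x := Real.sinh_pos_iff.mpr hx
    rw [h3]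
    nlinarith [mul_nonneg (sub_nonneg.mpr h1)
        (by nlinarith : (0:ℝ) ≤ 727 * Real.cosh x ^ 2 + 704 * Real.cosh x + 105),
      mul_le_mul_of_nonneg_left h2 h5.le, mul_self_nonneg (Real.sinh x - x),
      mul_le_mul h2 h2 hx.le h5.le]
  have h5 : ∀ x : ℝ, 0 < x →
      0 < (243 * Real.sinh (3*x) - 141 * Real.sinh x) / 4
          - 19 * x * Real.cosh x - 2 * x ^ 2 * Real.sinh x := by
    apply aux_pos_of_deriv _ (fun x => (729 * Real.cosh (3*x) - 217 * Real.cosh x) / 4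
          - 23 * x * Real.sinh x - 2 * x ^ 2 * Real.cosh x) _ (by simp) h6
    intro x
    have h := ((((((hd3 x).sinh.const_mul (243:ℝ)).sub
        ((Real.hasDerivAt_sinh x).const_mul (141:ℝ))).div_const 4).sub
        (((hasDerivAt_id' x).mul (Real.hasDerivAt_cosh x)).const_mul (19:ℝ))).sub
        (((hasDerivAt_pow 2 x).mul (Real.hasDerivAt_sinh x)).const_mul (2:ℝ)))
    convert h using 1
    · rfl
    · rfl
    · funext y; simp only [Pi.sub_apply, Pi.add_apply, Pi.mul_apply]; ring
    · norm_num; ring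
  have h4 : ∀ x : ℝ, 0 < x →
      0 < (81 * Real.cosh (3*x) - 81 * Real.cosh x) / 4
          - 15 * x * Real.sinh x - 2 * x ^ 2 * Real.cosh x := by
    apply aux_pos_of_deriv _ (fun x => (243 * Real.sinh (3*x) - 141 * Real.sinh x) / 4
          - 19 * x * Real.cosh x - 2 * x ^ 2 * Real.sinh x) _ (by simp) h5
    intro x
    have h := ((((((hd3 x).cosh.const_mul (81:ℝ)).sub
        ((Real.hasDerivAt_cosh x).const_mul (81:ℝ))).div_const 4).sub
        (((hasDerivAt_id' x).mul (Real.hasDerivAt_sinh x)).const_mul (15:ℝ))).sub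
        (((hasDerivAt_pow 2 x).mul (Real.hasDerivAt_cosh x)).const_mul (2:ℝ)))
    convert h using 1
    · rfl
    · rfl
    · funext y; simp only [Pi.sub_apply, Pi.add_apply, Pi.mul_apply]; ring
    · norm_num; ring
  have h3 : ∀ x : ℝ, 0 < x →
      0 < (27 * Real.sinh (3*x) - 37 * Real.sinh x) / 4
          - 11 * x * Real.cosh x - 2 * x ^ 2 * Real.sinh x := by
    apply aux_pos_of_deriv _ (fun x => (81 * Real.cosh (3*x) - 81 * Real.cosh x) / 4
          - 15 * x * Real.sinh x - 2 * x ^ 2 * Real.cosh x) _ (by simp) h4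
    intro x
    have h := ((((((hd3 x).sinh.const_mul (27:ℝ)).sub
        ((Real.hasDerivAt_sinh x).const_mul (37:ℝ))).div_const 4).sub
        (((hasDerivAt_id' x).mul (Real.hasDerivAt_cosh x)).const_mul (11:ℝ))).sub
        (((hasDerivAt_pow 2 x).mul (Real.hasDerivAt_sinh x)).const_mul (2:ℝ)))
    convert h using 1
    · rfl
    · rfl
    · funext y; simp only [Pi.sub_apply, Pi.add_apply, Pi.mul_apply]; ring
    · norm_num; ring
  have h2 : ∀ x : ℝ, 0 < x →
      0 < (9 * Real.cosh (3*x) - 9 * Real.cosh x) / 4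
          - 7 * x * Real.sinh x - 2 * x ^ 2 * Real.cosh x := by
    apply aux_pos_of_deriv _ (fun x => (27 * Real.sinh (3*x) - 37 * Real.sinh x) / 4
          - 11 * x * Real.cosh x - 2 * x ^ 2 * Real.sinh x) _ (by simp) h3
    intro x
    have h := ((((((hd3 x).cosh.const_mul (9:ℝ)).sub
        ((Real.hasDerivAt_cosh x).const_mul (9:ℝ))).div_const 4).sub
        (((hasDerivAt_id' x).mul (Real.hasDerivAt_sinh x)).const_mul (7:ℝ))).sub
        (((hasDerivAt_pow 2 x).mul (Real.hasDerivAt_cosh x)).const_mul (2:ℝ)))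
    convert h using 1
    · rfl
    · rfl
    · funext y; simp only [Pi.sub_apply, Pi.add_apply, Pi.mul_apply]; ring
    · norm_num; ring
  have h1 : ∀ x : ℝ, 0 < x →
      0 < (3 * Real.sinh (3*x) + 3 * Real.sinh x) / 4
          - 3 * x * Real.cosh x - 2 * x ^ 2 * Real.sinh x := by
    apply aux_pos_of_deriv _ (fun x => (9 * Real.cosh (3*x) - 9 * Real.cosh x) / 4
          - 7 * x * Real.sinh x - 2 * x ^ 2 * Real.cosh x) _ (by simp) h2
    intro x
    have h := ((((((hd3 x).sinh.const_mul (3:ℝ)).add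
        ((Real.hasDerivAt_sinh x).const_mul (3:ℝ))).div_const 4).sub
        (((hasDerivAt_id' x).mul (Real.hasDerivAt_cosh x)).const_mul (3:ℝ))).sub
        (((hasDerivAt_pow 2 x).mul (Real.hasDerivAt_sinh x)).const_mul (2:ℝ)))
    convert h using 1
    · rfl
    · rfl
    · funext y; simp only [Pi.sub_apply, Pi.add_apply, Pi.mul_apply]; ring
    · norm_num; ring
  have h0 : ∀ x : ℝ, 0 < x →
      0 < (Real.cosh (3*x) - Real.cosh x) / 4
          + x * Real.sinh x - 2 * x ^ 2 * Real.cosh x := by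
    apply aux_pos_of_deriv _ (fun x => (3 * Real.sinh (3*x) + 3 * Real.sinh x) / 4
          - 3 * x * Real.cosh x - 2 * x ^ 2 * Real.sinh x) _ (by simp) h1
    intro x
    have h := (((((hd3 x).cosh.sub (Real.hasDerivAt_cosh x)).div_const 4).add
        ((hasDerivAt_id' x).mul (Real.hasDerivAt_sinh x))).sub
        (((hasDerivAt_pow 2 x).mul (Real.hasDerivAt_cosh x)).const_mul (2:ℝ)))
    convert h using 1
    · rfl
    · rfl
    · funext y; simp only [Pi.sub_apply, Pi.add_apply, Pi.mul_apply]; ring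
    · norm_num; ring
  intro k hk
  have h := h0 k hk
  have hsq := Real.cosh_sq k
  have key : Real.sinh k ^ 2 * Real.cosh k = (Real.cosh (3*k) - Real.cosh k) / 4 := by
    rw [Real.cosh_three_mul k]
    linear_combination (-Real.cosh k) * hsq
  linarith

/-- The auxiliary function `φ`. -/
noncomputable def phiAux (k : ℝ) : ℝ :=
  (Real.sinh k * Real.cosh k - k) / (k * Real.sinh k ^ 2)

lemma phiAux_hasDerivAt {x : ℝ} (hx : 0 < x) :
    HasDerivAt phiAux
      (((Real.cosh x * Real.cosh x + Real.sinh x * Real.sinh x - 1) * (x * Real.sinh x ^ 2)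
        - (Real.sinh x * Real.cosh x - x) * (1 * Real.sinh x ^ 2 + x * (2 * Real.sinh x ^ 1 * Real.cosh x)))
        / (x * Real.sinh x ^ 2) ^ 2) x := by
  have hs : Real.sinh x ≠ 0 := ne_of_gt (Real.sinh_pos_iff.mpr hx)
  have hne : x * Real.sinh x ^ 2 ≠ 0 := by positivity
  have hN : HasDerivAt (fun k => Real.sinh k * Real.cosh k - k)
      (Real.cosh x * Real.cosh x + Real.sinh x * Real.sinh x - 1) x :=
    ((Real.hasDerivAt_sinh x).mul (Real.hasDerivAt_cosh x)).sub (hasDerivAt_id' x)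
  have hD : HasDerivAt (fun k => k * Real.sinh k ^ 2)
      (1 * Real.sinh x ^ 2 + x * (2 * Real.sinh x ^ 1 * Real.cosh x)) x :=
    (hasDerivAt_id' x).mul ((Real.hasDerivAt_sinh x).pow 2)
  exact hN.div hD hne

lemma phiAux_anti : StrictAntiOn phiAux (Set.Ioi (0:ℝ)) := by
  apply strictAntiOn_of_deriv_neg (convex_Ioi 0)
  · intro x hx
    exact (phiAux_hasDerivAt hx).continuousAt.continuousWithinAt
  · intro x hx
    rw [interior_Ioi] at hx
    rw [(phiAux_hasDerivAt hx).deriv]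
    apply div_neg_of_neg_of_pos
    · have hE := E_pos x hx
      have h5 : (0:ℝ) < Real.sinh x := Real.sinh_pos_iff.mpr hx
      have hz : x * Real.sinh x ^ 2 * (Real.cosh x ^ 2 - Real.sinh x ^ 2 - 1) = 0 := by
        rw [Real.cosh_sq]; ring
      nlinarith [mul_pos h5 hE, hz]
    · have h5 : (0:ℝ) < Real.sinh x := Real.sinh_pos_iff.mpr hx
      have hx0 : (0:ℝ) < x := hx
      exact pow_pos (mul_pos hx0 (pow_pos h5 2)) 2

/-- On the curve `Γ` the dispersion relation has exactly one positive root `s`,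
which is a double root: `𝒟(s) = 0` and `𝒟′(s) = 0`. -/
theorem stmt_3 (s : ℝ) (hs : 0 < s) (α β : ℝ)
    (hα : α = s ^ 2 / (2 * Real.sinh s ^ 2) + s / (2 * Real.tanh s))
    (hβ : β = -1 / (2 * Real.sinh s ^ 2) + 1 / (2 * s * Real.tanh s)) :
    disp α β s = 0 ∧ deriv (disp α β) s = 0 ∧
      ∀ k : ℝ, 0 < k → disp α β k = 0 → k = s := by
  have hss : (0:ℝ) < Real.sinh s := Real.sinh_pos_iff.mpr hs
  have hcs : (0:ℝ) < Real.cosh s := Real.cosh_pos s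
  have hsne : Real.sinh s ≠ 0 := ne_of_gt hss
  have hcne : Real.cosh s ≠ 0 := ne_of_gt hcs
  have hsne' : s ≠ 0 := ne_of_gt hs
  have htanh : Real.tanh s = Real.sinh s / Real.cosh s := Real.tanh_eq_sinh_div_cosh s
  -- Part 1
  have part1 : disp α β s = 0 := by
    rw [disp, hα, hβ, htanh]
    field_simp
    ring
  -- 2β = φ(s)
  have h2β : 2 * β = phiAux s := by
    rw [hβ, htanh, phiAux]
    field_simp
    ring
  -- Part 2
  have hdisp : ∀ x : ℝ, HasDerivAt (disp α β)
      ((β * (2 * x ^ 1)) * Real.sinh x + (α + β * x ^ 2) * Real.cosh x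
        - (1 * Real.cosh x + x * Real.sinh x)) x := by
    intro x
    unfold disp
    exact ((((hasDerivAt_pow 2 x).const_mul β).const_add α).mul (Real.hasDerivAt_sinh x)).sub
      ((hasDerivAt_id' x).mul (Real.hasDerivAt_cosh x))
  have e1 : α + β * s ^ 2 = s * Real.cosh s / Real.sinh s := by
    rw [hα, hβ, htanh]; field_simp; ring
  have e2 : β * (2 * s ^ 1) = (Real.sinh s * Real.cosh s - s) / Real.sinh s ^ 2 := by
    rw [hβ, htanh]; field_simp; ring
  have part2 : deriv (disp α β) s = 0 := by
    rw [(hdisp s).deriv, e1, e2]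
    have hsq := Real.cosh_sq s
    field_simp
    linear_combination s * hsq
  refine ⟨part1, part2, ?_⟩
  -- Part 3: uniqueness
  intro k hk hdk
  by_contra hne
  set G : ℝ → ℝ := fun x => α + β * x ^ 2 - x * Real.cosh x / Real.sinh x with hG
  have hGval : ∀ x : ℝ, 0 < x → disp α β x = Real.sinh x * G x := by
    intro x hx
    have hsx : Real.sinh x ≠ 0 := ne_of_gt (Real.sinh_pos_iff.mpr hx)
    rw [disp, hG]
    field_simp
  have hGs : G s = 0 := by
    have := hGval s hs
    rw [part1] at this
    exact (mul_eq_zero.mp this.symm).resolve_left hsne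
  have hGk : G k = 0 := by
    have := hGval k hk
    rw [hdk] at this
    exact (mul_eq_zero.mp this.symm).resolve_left (ne_of_gt (Real.sinh_pos_iff.mpr hk))
  -- derivative of G
  have hGd : ∀ x : ℝ, 0 < x → HasDerivAt G (x * (2 * β - phiAux x)) x := by
    intro x hx
    have hsx : Real.sinh x ≠ 0 := ne_of_gt (Real.sinh_pos_iff.mpr hx)
    have h : HasDerivAt G
        ((β * (2 * x ^ 1)) -
          ((1 * Real.cosh x + x * Real.sinh x) * Real.sinh x - x * Real.cosh x * Real.cosh x)
            / Real.sinh x ^ 2) x := by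
      rw [hG]
      exact (((hasDerivAt_pow 2 x).const_mul β).const_add α).sub
        (((hasDerivAt_id' x).mul (Real.hasDerivAt_cosh x)).div (Real.hasDerivAt_sinh x) hsx)
    convert h using 1
    rw [phiAux]
    have hsq := Real.cosh_sq x
    field_simp
    linear_combination (-x) * hsq
  rcases lt_or_gt_of_ne hne with hlt | hgt
  · -- k < s : G strictly decreasing on [k, s]
    have hanti : StrictAntiOn G (Set.Icc k s) := by
      apply strictAntiOn_of_deriv_neg (convex_Icc k s)
      · intro x hx
        have hx0 : 0 < x := lt_of_lt_of_le hk hx.1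
        exact (hGd x hx0).continuousAt.continuousWithinAt
      · intro x hx
        rw [interior_Icc] at hx
        have hx0 : 0 < x := lt_trans hk hx.1
        rw [(hGd x hx0).deriv]
        have hφ : phiAux s < phiAux x :=
          phiAux_anti (Set.mem_Ioi.mpr hx0) (Set.mem_Ioi.mpr hs) hx.2
        have : 2 * β - phiAux x < 0 := by rw [h2β]; linarith
        exact mul_neg_of_pos_of_neg hx0 this
    have := hanti (Set.left_mem_Icc.mpr hlt.le) (Set.right_mem_Icc.mpr hlt.le) hlt
    rw [hGs, hGk] at this
    exact absurd this (lt_irrefl 0)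
  · -- s < k : G strictly increasing on [s, k]
    have hmono : StrictMonoOn G (Set.Icc s k) := by
      apply strictMonoOn_of_deriv_pos (convex_Icc s k)
      · intro x hx
        have hx0 : 0 < x := lt_of_lt_of_le hs hx.1
        exact (hGd x hx0).continuousAt.continuousWithinAt
      · intro x hx
        rw [interior_Icc] at hx
        have hx0 : 0 < x := lt_trans hs hx.1
        rw [(hGd x hx0).deriv]
        have hφ : phiAux x < phiAux s :=
          phiAux_anti (Set.mem_Ioi.mpr hs) (Set.mem_Ioi.mpr hx0) hx.1
        have : 0 < 2 * β - phiAux x := by rw [h2β]; linarith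
        exact mul_pos hx0 this
    have := hmono (Set.left_mem_Icc.mpr hgt.le) (Set.right_mem_Icc.mpr hgt.le) hgt
    rw [hGs, hGk] at this
    exact absurd this (lt_irrefl 0)
end

section
/- Let α ∈ (0,1), β > 0, and let k⋆ > 0 be the unique positive root of 𝒟(k) = (α + βk²)·sinh(k) − k·cosh(k). Then for every integer n and every real ℓ, setting σ = √(n²k⋆² + ℓ²), the equation (α + βσ²)·σ·sinh(σ) − n²k⋆²·cosh(σ) = 0 holds if and only if ℓ = 0 and n ∈ {−1, 0, 1}. -/
lemma disp_pos_of_large (α β : ℝ) (hα : 0 < α) (hβ : 0 < β) {k : ℝ}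
    (hk1 : 1 ≤ k) (hk2 : 2 / β < k) : 0 < disp α β k := by
  have hk0 : 0 < k := lt_of_lt_of_le one_pos hk1
  have hbk : 2 < β * k := by
    rw [div_lt_iff₀ hβ] at hk2; linarith
  have hE : Real.exp 1 ≤ Real.exp k := Real.exp_le_exp.mpr hk1
  have hE2 : (2.7 : ℝ) < Real.exp 1 := by
    have := Real.exp_one_gt_d9; linarith
  have hEF : Real.exp k * Real.exp (-k) = 1 := by
    rw [← Real.exp_add]; simp
  have hFpos : 0 < Real.exp (-k) := Real.exp_pos _
  have hEpos : 0 < Real.exp k := Real.exp_pos _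
  have h3 : 3 * Real.exp (-k) < Real.exp k := by
    have h9 : (3 : ℝ) < Real.exp k * Real.exp k := by nlinarith
    nlinarith
  have hsinh : Real.sinh k = (Real.exp k - Real.exp (-k)) / 2 := Real.sinh_eq k
  have hcosh : Real.cosh k = (Real.exp k + Real.exp (-k)) / 2 := Real.cosh_eq k
  unfold disp
  rw [hsinh, hcosh]
  nlinarith [mul_pos hα (show (0:ℝ) < Real.exp k - Real.exp (-k) by nlinarith),
    mul_pos hk0 (show (0:ℝ) < Real.exp k - 3 * Real.exp (-k) by nlinarith),
    mul_nonneg (mul_nonneg (show (0:ℝ) ≤ β * k - 2 by linarith) hk0.le)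
      (show (0:ℝ) ≤ Real.exp k - Real.exp (-k) by nlinarith)]

lemma disp_continuous (α β : ℝ) : Continuous (disp α β) := by
  unfold disp; continuity

/-- In Region I, with `k⋆` the unique positive root of the dispersion relation, for
`σ = √(n²k⋆² + ℓ²)` the equation `(α + βσ²)σ sinh σ − n²k⋆² cosh σ = 0` holds iff
`ℓ = 0` and `n ∈ {−1, 0, 1}`. -/
theorem stmt_5 (α β kstar : ℝ) (hα0 : 0 < α) (hα1 : α < 1) (hβ : 0 < β)
    (hk : 0 < kstar) (hroot : disp α β kstar = 0)
    (huniq : ∀ k : ℝ, 0 < k → disp α β k = 0 → k = kstar) :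
    ∀ (n : ℤ) (ℓ : ℝ),
      ((α + β * ((n : ℝ) ^ 2 * kstar ^ 2 + ℓ ^ 2)) *
            Real.sqrt ((n : ℝ) ^ 2 * kstar ^ 2 + ℓ ^ 2) *
            Real.sinh (Real.sqrt ((n : ℝ) ^ 2 * kstar ^ 2 + ℓ ^ 2))
          - (n : ℝ) ^ 2 * kstar ^ 2 *
            Real.cosh (Real.sqrt ((n : ℝ) ^ 2 * kstar ^ 2 + ℓ ^ 2)) = 0)
        ↔ (ℓ = 0 ∧ (n = -1 ∨ n = 0 ∨ n = 1)) := by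
  intro n ℓ
  set q : ℝ := (n : ℝ) ^ 2 * kstar ^ 2 + ℓ ^ 2 with hq
  have hqnn : 0 ≤ q := by positivity
  set s : ℝ := Real.sqrt q with hsdef
  have hs2 : s ^ 2 = q := Real.sq_sqrt hqnn
  have hsnn : 0 ≤ s := Real.sqrt_nonneg _
  constructor
  · intro heq
    -- key identity : s * disp α β s = -(ℓ^2 * cosh s)
    have hds : s * disp α β s = -(ℓ ^ 2 * Real.cosh s) := by
      have h1 : (α + β * q) * s * Real.sinh s = (n : ℝ) ^ 2 * kstar ^ 2 * Real.cosh s := by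
        linarith [heq]
      unfold disp
      linear_combination h1 + (β * s * Real.sinh s - Real.cosh s) * hs2 - Real.cosh s * hq
    by_cases hn : n = 0
    · subst hn
      refine ⟨?_, Or.inr (Or.inl rfl)⟩
      by_contra hℓ
      have hq0 : 0 < q := by
        have h2 : (0:ℝ) < ℓ ^ 2 := by positivity
        rw [hq]; push_cast; nlinarith
      have hspos : 0 < s := Real.sqrt_pos.mpr hq0
      have hsinh : 0 < Real.sinh s := Real.sinh_pos_iff.mpr hspos
      have h3 : (α + β * q) * s * Real.sinh s = 0 := by
        simpa using heq
      have hpos : 0 < (α + β * q) * s * Real.sinh s := by positivity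
      linarith
    · -- n ≠ 0
      have hn1 : 1 ≤ (n : ℝ) ^ 2 := by
        have : (1 : ℤ) ≤ n ^ 2 := by
          rcases lt_or_gt_of_ne hn with h | h <;> nlinarith
        exact_mod_cast this
      have hsk : kstar ≤ s := by
        have : kstar ^ 2 ≤ q := by nlinarith
        calc kstar = Real.sqrt (kstar ^ 2) := (Real.sqrt_sq hk.le).symm
          _ ≤ s := Real.sqrt_le_sqrt this
      have hspos : 0 < s := lt_of_lt_of_le hk hsk
      have hℓ0 : ℓ = 0 := by
        by_contra hℓ
        have hℓ2 : 0 < ℓ ^ 2 := by positivity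
        have hcosh : 0 < Real.cosh s := Real.cosh_pos s
        have hdneg : disp α β s < 0 := by
          have h1 : s * disp α β s < 0 := by rw [hds]; nlinarith
          nlinarith
        have hsk' : kstar < s := by
          rcases lt_or_eq_of_le hsk with h | h
          · exact h
          · exfalso; rw [← h] at hdneg; linarith [hroot]
        obtain ⟨K, hKs, hK1, hK2⟩ : ∃ K : ℝ, s < K ∧ 1 ≤ K ∧ 2 / β < K := by
          refine ⟨max s (max 1 (2 / β)) + 1, ?_, ?_, ?_⟩
          · exact lt_of_le_of_lt (le_max_left _ _) (lt_add_one _)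
          · have : (1:ℝ) ≤ max s (max 1 (2 / β)) :=
              le_trans (le_max_left _ _) (le_max_right _ _)
            linarith
          · have : 2 / β ≤ max s (max 1 (2 / β)) :=
              le_trans (le_max_right _ _) (le_max_right _ _)
            linarith
        have hdK : 0 < disp α β K := disp_pos_of_large α β hα0 hβ hK1 hK2
        have hivt := intermediate_value_Icc hKs.le ((disp_continuous α β).continuousOn)
        have h0mem : (0 : ℝ) ∈ Set.Icc (disp α β s) (disp α β K) := ⟨hdneg.le, hdK.le⟩
        obtain ⟨c, hc, hc0⟩ := hivt h0mem
        have hcpos : 0 < c := lt_of_lt_of_le hspos hc.1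
        have hck : c = kstar := huniq c hcpos hc0
        have : kstar < c := lt_of_lt_of_le hsk' hc.1
        linarith
      refine ⟨hℓ0, ?_⟩
      have hd0 : disp α β s = 0 := by
        have h4 : s * disp α β s = 0 := by rw [hds, hℓ0]; ring
        exact (mul_eq_zero.mp h4).resolve_left (ne_of_gt hspos)
      have hsk' : s = kstar := huniq s hspos hd0
      have hkeq : kstar ^ 2 = (n : ℝ) ^ 2 * kstar ^ 2 := by
        have h7 := hs2
        rw [hsk', hq, hℓ0] at h7
        linarith
      have hn2 : (1 : ℝ) = (n : ℝ) ^ 2 := by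
        have h5 : (1:ℝ) * kstar ^ 2 = (n : ℝ) ^ 2 * kstar ^ 2 := by linarith
        exact mul_right_cancel₀ (by positivity) h5
      have hn2' : n ^ 2 = 1 := by exact_mod_cast hn2.symm
      have := mul_self_eq_one_iff.mp (by nlinarith [hn2'] : n * n = 1)
      tauto
  · rintro ⟨rfl, hn⟩
    have hc : ((n:ℝ))^2 = 0 ∨ ((n:ℝ))^2 = 1 := by
      rcases hn with h | h | h <;> subst h <;> simp
    rcases hc with h | h
    · have hq0 : q = 0 := by rw [hq, h]; ring
      have hs0 : s = 0 := by rw [hsdef, hq0, Real.sqrt_zero]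
      rw [hs0, h]; simp
    · have hqk : q = kstar ^ 2 := by rw [hq, h]; ring
      have hsk : s = kstar := by rw [hsdef, hqk, Real.sqrt_sq hk.le]
      rw [hsk, h, hqk]
      have h6 : kstar * disp α β kstar = 0 := by rw [hroot]; ring
      unfold disp at h6
      nlinarith [h6]
end

section
/- Let α > 0, β > 0 and k⋆ > 0 satisfy 𝒟(k⋆) = 0 and 𝒟(2k⋆) ≠ 0, where 𝒟(k) = (α + βk²)·sinh(k) − k·cosh(k). Set σ = tanh(k⋆), T̃ = βk⋆²/α, c(k⋆) = −1 − k⋆·(cosh(2k⋆) + 2)/𝒟(2k⋆), and m̃₂₁⁽²⁾ = −(9αβ + 16)k⋆ + 12αβk⋆·cosh(2k⋆) − 3αβk⋆·cosh(4k⋆) + 8α(2c(k⋆) − 1)·sinh(2k⋆) + 4α(c(k⋆) + 2)·sinh(4k⋆). Then σ² − T̃(3 − σ²) ≠ 0 and m̃₂₁⁽²⁾ = [8k⋆/((1 + T̃)²(1 − σ²)²)] · [1/(σ² − T̃(3 − σ²))] · (a₃T̃³ + a₂T̃² + a₁T̃ + a₀), where a₃ = −2σ⁶ + 10σ⁴ −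 14σ² + 6, a₂ = −6σ⁶ + 30σ⁴ − 55σ² + 33, a₁ = −6σ⁶ + 33σ⁴ − 62σ² + 36, a₀ = −2σ⁶ + 13σ⁴ − 12σ² + 9. -/
set_option maxHeartbeats 2000000 in
/-- Factorization of the coefficient `m̃₂₁⁽²⁾` in terms of `σ = tanh k⋆` and
`T̃ = βk⋆²/α`. -/
theorem stmt_6 (α β kstar : ℝ) (hα : 0 < α) (hβ : 0 < β) (hk : 0 < kstar)
    (hroot : disp α β kstar = 0) (h2k : disp α β (2 * kstar) ≠ 0)
    (σ T c m a0 a1 a2 a3 : ℝ)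
    (hσ : σ = Real.tanh kstar)
    (hT : T = β * kstar ^ 2 / α)
    (hc : c = -1 - kstar * (Real.cosh (2 * kstar) + 2) / disp α β (2 * kstar))
    (hm : m = -(9 * α * β + 16) * kstar + 12 * α * β * kstar * Real.cosh (2 * kstar)
        - 3 * α * β * kstar * Real.cosh (4 * kstar)
        + 8 * α * (2 * c - 1) * Real.sinh (2 * kstar)
        + 4 * α * (c + 2) * Real.sinh (4 * kstar))
    (ha3 : a3 = -2 * σ ^ 6 + 10 * σ ^ 4 - 14 * σ ^ 2 + 6)
    (ha2 : a2 = -6 * σ ^ 6 + 30 * σ ^ 4 - 55 * σ ^ 2 + 33)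
    (ha1 : a1 = -6 * σ ^ 6 + 33 * σ ^ 4 - 62 * σ ^ 2 + 36)
    (ha0 : a0 = -2 * σ ^ 6 + 13 * σ ^ 4 - 12 * σ ^ 2 + 9) :
    σ ^ 2 - T * (3 - σ ^ 2) ≠ 0 ∧
      m = (8 * kstar / ((1 + T) ^ 2 * (1 - σ ^ 2) ^ 2)) *
          (1 / (σ ^ 2 - T * (3 - σ ^ 2))) *
          (a3 * T ^ 3 + a2 * T ^ 2 + a1 * T + a0) := by
  set e := Real.exp kstar with hedef
  have he1 : 1 < e := by
    have := Real.add_one_lt_exp (ne_of_gt hk); simp only [hedef]; linarith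
  have he0 : (0:ℝ) < e := lt_trans one_pos he1
  have hene : e ≠ 0 := ne_of_gt he0
  have hem : e ^ 2 - 1 ≠ 0 := by nlinarith
  have hep : e ^ 2 + 1 ≠ 0 := by positivity
  have hk0 : kstar ≠ 0 := ne_of_gt hk
  have hα0 : α ≠ 0 := ne_of_gt hα
  have hT0 : 0 < T := by rw [hT]; positivity
  have h1T : (1:ℝ) + T ≠ 0 := by positivity
  have hexp2 : Real.exp (2 * kstar) = e ^ 2 := by rw [two_mul, Real.exp_add]; ring
  have hexp4 : Real.exp (4 * kstar) = e ^ 4 := by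
    rw [show (4:ℝ) * kstar = kstar + kstar + kstar + kstar by ring, Real.exp_add,
      Real.exp_add, Real.exp_add]; ring
  have hsinh : Real.sinh kstar = (e ^ 2 - 1) / (2 * e) := by
    rw [Real.sinh_eq, Real.exp_neg]; field_simp; ring
  have hcosh : Real.cosh kstar = (e ^ 2 + 1) / (2 * e) := by
    rw [Real.cosh_eq, Real.exp_neg]; field_simp; ring
  have hsinh2 : Real.sinh (2 * kstar) = (e ^ 4 - 1) / (2 * e ^ 2) := by
    rw [Real.sinh_eq, Real.exp_neg, hexp2]; field_simp
  have hcosh2 : Real.cosh (2 * kstar) = (e ^ 4 + 1) / (2 * e ^ 2) := by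
    rw [Real.cosh_eq, Real.exp_neg, hexp2]; field_simp
  have hsinh4 : Real.sinh (4 * kstar) = (e ^ 8 - 1) / (2 * e ^ 4) := by
    rw [Real.sinh_eq, Real.exp_neg, hexp4]; field_simp
  have hcosh4 : Real.cosh (4 * kstar) = (e ^ 8 + 1) / (2 * e ^ 4) := by
    rw [Real.cosh_eq, Real.exp_neg, hexp4]; field_simp
  have hβval : β = α * T / kstar ^ 2 := by rw [hT]; field_simp
  have hroot' : α * (1 + T) * (e ^ 2 - 1) = kstar * (e ^ 2 + 1) := by
    have h := hroot
    rw [disp, hsinh, hcosh, hβval] at h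
    field_simp at h
    linear_combination h
  have hαval : α = kstar * (e ^ 2 + 1) / ((1 + T) * (e ^ 2 - 1)) := by
    field_simp
    linear_combination hroot'
  have hD2val : disp α β (2 * kstar)
      = kstar * ((2 * T - 1) * (e ^ 2 + 1) ^ 2 + 4 * e ^ 2 * (1 + T))
        / (2 * e ^ 2 * (1 + T)) := by
    rw [disp, hsinh2, hcosh2, hβval, hαval]
    field_simp
    ring
  have hσval : σ = (e ^ 2 - 1) / (e ^ 2 + 1) := by
    rw [hσ, Real.tanh_eq_sinh_div_cosh, hsinh, hcosh]
    field_simp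
  have hQ : (2 * T - 1) * (e ^ 2 + 1) ^ 2 + 4 * e ^ 2 * (1 + T) ≠ 0 := by
    intro h0
    apply h2k
    rw [hD2val, h0, mul_zero, zero_div]
  have hEval : σ ^ 2 - T * (3 - σ ^ 2)
      = -((2 * T - 1) * (e ^ 2 + 1) ^ 2 + 4 * e ^ 2 * (1 + T)) / (e ^ 2 + 1) ^ 2 := by
    rw [hσval]; field_simp; ring
  have hEnz : σ ^ 2 - T * (3 - σ ^ 2) ≠ 0 := by
    rw [hEval]
    exact div_ne_zero (neg_ne_zero.mpr hQ) (pow_ne_zero 2 hep)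
  have hcval : c = -1 - (e ^ 4 + 4 * e ^ 2 + 1) * (1 + T)
      / ((2 * T - 1) * (e ^ 2 + 1) ^ 2 + 4 * e ^ 2 * (1 + T)) := by
    rw [hc, hcosh2, hD2val]
    field_simp
    ring
  have hσ1 : 1 - σ ^ 2 ≠ 0 := by
    rw [hσval]
    have h4 : (0:ℝ) < 4 * e ^ 2 := by positivity
    have : 1 - ((e ^ 2 - 1) / (e ^ 2 + 1)) ^ 2 = 4 * e ^ 2 / (e ^ 2 + 1) ^ 2 := by
      field_simp; ring
    rw [this]
    positivity
  have hAB : (1 + T) ^ 2 * (1 - σ ^ 2) ^ 2 * (σ ^ 2 - T * (3 - σ ^ 2)) ≠ 0 :=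
    mul_ne_zero (mul_ne_zero (pow_ne_zero _ h1T) (pow_ne_zero _ hσ1)) hEnz
  refine ⟨hEnz, ?_⟩
  rw [div_mul_div_comm, div_mul_eq_mul_div, eq_div_iff hAB]
  rw [hm, ha3, ha2, ha1, ha0, hσval, hcval, hβval, hαval, hsinh2, hsinh4, hcosh2, hcosh4]
  have hQ' : (e ^ 2 + 1) ^ 2 * (T * 2 - 1) + e ^ 2 * (1 + T) * 4 ≠ 0 := by
    intro h; apply hQ; linear_combination h
  field_simp
  ring
end

section
/- Let α > 0, β > 0 and k⋆ > 0 satisfy 𝒟(k⋆) = 0, where 𝒟(k) = (α + βk²)·sinh(k) − k·cosh(k). Set σ = tanh(k⋆) and T̃ = βk⋆²/α. Then σ² − T̃(3 − σ²) and 𝒟(2k⋆) have opposite signs: σ² − T̃(3 − σ²) > 0 if and only if 𝒟(2k⋆) < 0, σ² − T̃(3 − σ²) < 0 if and only if 𝒟(2k⋆) > 0, and σ² − T̃(3 − σ²) = 0 if and only if 𝒟(2k⋆) = 0. -/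
/-- At a positive root `k⋆` of the dispersion relation, `σ² − T̃(3 − σ²)` and `𝒟(2k⋆)`
have opposite signs. -/
theorem stmt_8 (α β kstar : ℝ) (hα : 0 < α) (hβ : 0 < β) (hk : 0 < kstar)
    (hroot : disp α β kstar = 0) (σ T : ℝ)
    (hσ : σ = Real.tanh kstar) (hT : T = β * kstar ^ 2 / α) :
    (0 < σ ^ 2 - T * (3 - σ ^ 2) ↔ disp α β (2 * kstar) < 0) ∧
    (σ ^ 2 - T * (3 - σ ^ 2) < 0 ↔ 0 < disp α β (2 * kstar)) ∧
    (σ ^ 2 - T * (3 - σ ^ 2) = 0 ↔ disp α β (2 * kstar) = 0) := by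
  have hs : 0 < Real.sinh kstar := by
    rw [← Real.sinh_zero]
    exact Real.sinh_lt_sinh.mpr hk
  have hc : 0 < Real.cosh kstar := Real.cosh_pos kstar
  have key : disp α β (2 * kstar)
      = -(2 * α * Real.sinh kstar * Real.cosh kstar) * (σ ^ 2 - T * (3 - σ ^ 2)) := by
    subst hσ hT
    set s := Real.sinh kstar with hsdef
    set c := Real.cosh kstar with hcdef
    unfold disp at hroot ⊢
    have hA : (α + β * (2 * kstar) ^ 2) * Real.sinh (2 * kstar)
        - 2 * kstar * Real.cosh (2 * kstar)
        = 2 * (3 * kstar * c ^ 2 - kstar * s ^ 2 - 3 * α * s * c) := by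
      rw [Real.sinh_two_mul, Real.cosh_two_mul]
      linear_combination (8 * c) * hroot
    have hB : (Real.tanh kstar) ^ 2 - (β * kstar ^ 2 / α) * (3 - (Real.tanh kstar) ^ 2)
        = -(3 * kstar * c ^ 2 - kstar * s ^ 2 - 3 * α * s * c) / (α * c * s) := by
      rw [Real.tanh_eq_sinh_div_cosh, ← hsdef, ← hcdef]
      field_simp
      linear_combination (s ^ 2 - 3 * c ^ 2) * hroot
    rw [hA, hB]
    field_simp
  have hpos : 0 < 2 * α * Real.sinh kstar * Real.cosh kstar := by positivity
  rw [key]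
  refine ⟨⟨fun h => ?_, fun h => ?_⟩, ⟨fun h => ?_, fun h => ?_⟩, ⟨fun h => ?_, fun h => ?_⟩⟩
  · nlinarith
  · nlinarith
  · nlinarith
  · nlinarith
  · rw [h]; ring
  · nlinarith
end

section
/- (Proposition on the sign of the coefficient, Region I.) Let α ∈ (0,1), β > 0, and let k⋆ > 0 be the unique positive root of 𝒟(k) = (α + βk²)·sinh(k) − k·cosh(k). Then 𝒟(2k⋆) ≠ 0, and the coefficient m̃₂₁⁽²⁾ = −(9αβ + 16)k⋆ + 12αβk⋆·cosh(2k⋆) − 3αβk⋆·cosh(4k⋆) + 8α(2c(k⋆) − 1)·sinh(2k⋆) + 4α(c(k⋆) + 2)·sinh(4k⋆), with c(k⋆) = −1 − k⋆(cosh(2k⋆) + 2)/𝒟(2k⋆), is strictly negative. -/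
private lemma aux_sinh (x : ℝ) (hx : 0 ≤ x) : Real.sinh x ≤ x * Real.cosh x := by
  have key : ∀ t : ℝ, HasDerivAt (fun u : ℝ => u * Real.cosh u - Real.sinh u)
      (t * Real.sinh t) t := by
    intro t
    have h := ((hasDerivAt_id t).mul (Real.hasDerivAt_cosh t)).sub (Real.hasDerivAt_sinh t)
    refine h.congr_deriv ?_
    simp only [id_eq]
    ring
  have mono : MonotoneOn (fun u : ℝ => u * Real.cosh u - Real.sinh u) (Set.Ici 0) := by
    apply monotoneOn_of_deriv_nonneg (convex_Ici 0)
    · exact ((continuous_id.mul Real.continuous_cosh).sub Real.continuous_sinh).continuousOn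
    · intro t _
      exact (key t).differentiableAt.differentiableWithinAt
    · intro t ht
      rw [interior_Ici] at ht
      rw [(key t).deriv]
      have ht0 : (0:ℝ) < t := ht
      exact mul_nonneg ht0.le (Real.sinh_pos_iff.mpr ht0).le
  have h0 : (0:ℝ) ∈ Set.Ici (0:ℝ) := Set.self_mem_Ici
  have := mono h0 (Set.mem_Ici.mpr hx) hx
  simp only [Real.sinh_zero, Real.cosh_zero, zero_mul, sub_zero, mul_one] at this
  linarith

private lemma aux_three (x : ℝ) (hx : 0 ≤ x) :
    3 * Real.sinh x * Real.cosh x ≤ x * (2 * Real.cosh x ^ 2 + 1) := by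
  have key : ∀ t : ℝ, HasDerivAt
      (fun u : ℝ => u * (2 * Real.cosh u ^ 2 + 1) - 3 * Real.sinh u * Real.cosh u)
      (4 * Real.sinh t * (t * Real.cosh t - Real.sinh t)) t := by
    intro t
    have hch : HasDerivAt (fun u : ℝ => 2 * Real.cosh u ^ 2 + 1)
        (2 * (2 * Real.cosh t ^ 1 * Real.sinh t)) t := by
      exact (((Real.hasDerivAt_cosh t).pow 2).const_mul 2).add_const 1
    have h1 := (hasDerivAt_id t).mul hch
    have h2 := (((Real.hasDerivAt_sinh t).const_mul 3).mul (Real.hasDerivAt_cosh t))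
    have h := h1.sub h2
    refine h.congr_deriv ?_
    simp only [pow_one, id_eq]
    linear_combination (-1 : ℝ) * Real.cosh_sq t
  have mono : MonotoneOn
      (fun u : ℝ => u * (2 * Real.cosh u ^ 2 + 1) - 3 * Real.sinh u * Real.cosh u)
      (Set.Ici 0) := by
    apply monotoneOn_of_deriv_nonneg (convex_Ici 0)
    · apply Continuous.continuousOn
      continuity
    · intro t _
      exact (key t).differentiableAt.differentiableWithinAt
    · intro t ht
      rw [interior_Ici] at ht
      rw [(key t).deriv]
      have ht0 : (0:ℝ) < t := ht
      have h1 : 0 ≤ Real.sinh t := (Real.sinh_pos_iff.mpr ht0).le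
      have h2 : Real.sinh t ≤ t * Real.cosh t := aux_sinh t ht0.le
      have : 0 ≤ t * Real.cosh t - Real.sinh t := by linarith
      positivity
  have h0 : (0:ℝ) ∈ Set.Ici (0:ℝ) := Set.self_mem_Ici
  have := mono h0 (Set.mem_Ici.mpr hx) hx
  simp only [Real.sinh_zero, Real.cosh_zero, zero_mul, mul_zero, sub_zero, mul_one,
    one_pow, zero_sub, mul_one] at this
  nlinarith [this]

private lemma key_ineq_s11 (a k s h : ℝ) (ha0 : 0 < a) (ha1 : a < 1) (hk : 0 < k) (hs : 0 < s)
    (hh : 0 < h) (hsk : s ≤ k * h) (hpy : h ^ 2 = s ^ 2 + 1) :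
    -16*a*k^2*s*h*(2*s^4+17*s^2+15) + 48*a^2*k*s^2*(s^4+6*s^2+4)
      - 144*a^3*s^5*h - 32*k^3*(2*s^2+3) < 0 := by
  rcases le_or_gt s 1 with hcase | hcase
  · -- small s : use k*h ≥ s and a^2 < a
    have t1 : 0 ≤ 16*a*k*s*(k*h - s)*(2*s^4+17*s^2+15) := by
      have : (0:ℝ) ≤ k*h - s := by linarith
      positivity
    have t2 : 0 < 48*a*(1-a)*k*s^2*(s^4+6*s^2+4) := by
      have : (0:ℝ) < 1 - a := by linarith
      positivity
    have t3 : 0 ≤ 16*a*k*s^2*(3 - s^2 - s^4) := by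
      have h2 : s^2 ≤ 1 := by nlinarith
      have h4 : s^4 ≤ 1 := by nlinarith
      have : (0:ℝ) ≤ 3 - s^2 - s^4 := by linarith
      positivity
    have t4 : 0 < 32*k^3*(2*s^2+3) := by positivity
    have t5 : 0 ≤ 144*a^3*s^5*h := by positivity
    nlinarith [t1, t2, t3, t4, t5]
  · -- large s : AM-GM between the a and a^3 terms
    have hs2 : 1 ≤ s^2 := by nlinarith
    have hs4 : 1 ≤ s^4 := by nlinarith
    have hs6 : 1 ≤ s^6 := by nlinarith
    have hs8 : 1 ≤ s^8 := by nlinarith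
    have hpoly : 0 ≤ 7*s^8 + 64*s^6 + 84*s^4 + 12*s^2 - 16 := by linarith
    set A : ℝ := 144*a^3*s^5*h with hA
    set B : ℝ := 16*a*k^2*s*h*(2*s^4+17*s^2+15) with hB
    set C : ℝ := 24*a^2*k*s^2*(s^4+6*s^2+4) with hC
    have hApos : 0 < A := by rw [hA]; positivity
    have hBpos : 0 < B := by rw [hB]; positivity
    have hCpos : 0 < C := by rw [hC]; positivity
    have hABdiff : A * B - C^2 = 576*a^4*k^2*s^4*(7*s^8 + 64*s^6 + 84*s^4 + 12*s^2 - 16) := by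
      rw [hA, hB, hC]
      linear_combination (2304*a^4*k^2*s^6*(2*s^4+17*s^2+15)) * hpy
    have hABC : C^2 ≤ A * B := by nlinarith [mul_nonneg (by positivity : (0:ℝ) ≤ 576*a^4*k^2*s^4) hpoly]
    have hsum : 0 ≤ A + B + 2*C := by positivity
    have h2C : 2*C ≤ A + B := by nlinarith [hABC, sq_nonneg (A - B), hsum]
    have t4 : 0 < 32*k^3*(2*s^2+3) := by positivity
    have hgoal : -16*a*k^2*s*h*(2*s^4+17*s^2+15) + 48*a^2*k*s^2*(s^4+6*s^2+4)
      - 144*a^3*s^5*h - 32*k^3*(2*s^2+3) = -B + 2*C - A - 32*k^3*(2*s^2+3) := by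
      rw [hA, hB, hC]; ring
    rw [hgoal]
    linarith

/-- In Region I, with `k⋆` the unique positive root of the dispersion relation, the
coefficient `m̃₂₁⁽²⁾` is well defined (`𝒟(2k⋆) ≠ 0`) and strictly negative. -/
theorem stmt_11 (α β kstar : ℝ) (hα0 : 0 < α) (hα1 : α < 1) (hβ : 0 < β)
    (hk : 0 < kstar) (hroot : disp α β kstar = 0)
    (huniq : ∀ k : ℝ, 0 < k → disp α β k = 0 → k = kstar)
    (c m : ℝ)
    (hc : c = -1 - kstar * (Real.cosh (2 * kstar) + 2) / disp α β (2 * kstar))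
    (hm : m = -(9 * α * β + 16) * kstar + 12 * α * β * kstar * Real.cosh (2 * kstar)
        - 3 * α * β * kstar * Real.cosh (4 * kstar)
        + 8 * α * (2 * c - 1) * Real.sinh (2 * kstar)
        + 4 * α * (c + 2) * Real.sinh (4 * kstar)) :
    disp α β (2 * kstar) ≠ 0 ∧ m < 0 := by
  set s := Real.sinh kstar with hs_def
  set h := Real.cosh kstar with hh_def
  have hs : 0 < s := Real.sinh_pos_iff.mpr hk
  have hh : 0 < h := Real.cosh_pos kstar
  have hpy : h ^ 2 = s ^ 2 + 1 := Real.cosh_sq kstar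
  have hsk : s ≤ kstar * h := aux_sinh kstar hk.le
  have h3 : 3*s*h ≤ kstar*(2*h^2+1) := aux_three kstar hk.le
  have hb : β * kstar^2 * s = kstar * h - α * s := by
    have h0 : (α + β * kstar ^ 2) * s - kstar * h = 0 := hroot
    linear_combination h0
  have hD : disp α β (2*kstar) = 4*kstar*h^2 + 2*kstar - 6*α*s*h := by
    show (α + β * (2*kstar) ^ 2) * Real.sinh (2*kstar) - (2*kstar) * Real.cosh (2*kstar)
      = 4*kstar*h^2 + 2*kstar - 6*α*s*h
    rw [Real.sinh_two_mul, Real.cosh_two_mul]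
    linear_combination (8*h) * hb + (2*kstar) * hpy
  have hDpos : 0 < disp α β (2*kstar) := by
    rw [hD]
    have hp : 0 < (1 - α) * (s * h) := by
      have : (0:ℝ) < 1 - α := by linarith
      positivity
    nlinarith [h3, hp]
  refine ⟨hDpos.ne', ?_⟩
  have hcD : c * (disp α β (2*kstar)) = -(disp α β (2*kstar)) - kstar*(h^2+s^2+2) := by
    rw [hc, Real.cosh_two_mul]
    rw [sub_mul, div_mul_cancel₀ _ hDpos.ne', ← hs_def, ← hh_def]
    ring
  rw [hD] at hcD
  have e4 : (4:ℝ)*kstar = 2*(2*kstar) := by ring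
  rw [e4, Real.sinh_two_mul (2*kstar), Real.cosh_two_mul (2*kstar),
    Real.sinh_two_mul kstar, Real.cosh_two_mul kstar] at hm
  have hTp : -16*α*kstar^2*s*h*(2*s^4+17*s^2+15) + 48*α^2*kstar*s^2*(s^4+6*s^2+4)
      - 144*α^3*s^5*h - 32*kstar^3*(2*s^2+3) < 0 :=
    key_ineq_s11 α kstar s h hα0 hα1 hk hs hh hsk hpy
  have hA : m * (kstar * s * (4*kstar*h^2 + 2*kstar - 6*α*s*h))
      = s * (-16*α*kstar^2*s*h*(2*s^4+17*s^2+15) + 48*α^2*kstar*s^2*(s^4+6*s^2+4)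
        - 144*α^3*s^5*h - 32*kstar^3*(2*s^2+3)) := by
    rw [hm]
    linear_combination
      (α*(-9 + 12*(h^2+s^2) - 3*((h^2+s^2)^2+(2*s*h)^2))*(4*kstar*h^2 + 2*kstar - 6*α*s*h)) * hb
      + (16*α*kstar*s^2*h*(h^2+s^2+2)) * hcD
      + ((-64)*kstar^3*s + 18*α*kstar^2*h + 30*α*kstar^2*h^3 - 12*α*kstar^2*h^5
        - 218*α*kstar^2*s^2*h - 36*α*kstar^2*s^2*h^3 - 16*α*kstar^2*s^4*h
        - 18*α^2*kstar*s - 84*α^2*kstar*s*h^2 + 30*α^2*kstar*s*h^4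
        + 234*α^2*kstar*s^3 + 114*α^2*kstar*s^3*h^2 + 48*α^2*kstar*s^5
        + 54*α^3*s^2*h - 18*α^3*s^2*h^3 - 126*α^3*s^4*h) * hpy
  have hpos : 0 < kstar * s * (4*kstar*h^2 + 2*kstar - 6*α*s*h) := by
    rw [← hD]
    exact mul_pos (mul_pos hk hs) hDpos
  nlinarith [hA, hpos, mul_neg_of_pos_of_neg hs hTp]
end

section
/- (Proposition on the sign of the coefficient, Region II.) Let α > 1 and β > 0, and suppose 𝒟(k) = (α + βk²)·sinh(k) − k·cosh(k) has exactly two roots k₁ < k₂ in (0,∞), both simple, with 2k₁ ≠ k₂. For i = 1, 2 let m̃₂₁⁽²⁾(kᵢ) = −(9αβ + 16)kᵢ + 12αβkᵢ·cosh(2kᵢ) − 3αβkᵢ·cosh(4kᵢ) + 8α(2c(kᵢ) − 1)·sinh(2kᵢ) + 4α(c(kᵢ) + 2)·sinh(4kᵢ), with c(kᵢ) = −1 − kᵢ(cosh(2kᵢ) + 2)/𝒟(2kᵢ). Then m̃₂₁⁽²⁾(k₂) < 0; moreover m̃₂₁⁽²⁾(k₁) < 0 if 2k₁ > k₂, and m̃₂₁⁽²⁾(k₁)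 > 0 if 2k₁ < k₂. -/
/-- The reduced polynomial `Q(s,h,v)` such that at a root `k` of `𝒟`,
`m̃₂₁⁽²⁾ · 𝒟(2k) = 2k² Q(sinh k, cosh k, βk sinh k)`. -/
noncomputable def Qv (s h v : ℝ) : ℝ :=
  -72 - 72*h*v - 120*s^2 + 96*v^2 + 64*s^2*h*v - 128*s^4 - 72*s^2*v^2
    + 184*s^4*h*v + 72*s^2*h*v^3 - 64*s^6 - 192*s^4*v^2

lemma Qv_neg (s h v : ℝ) (hh2 : h ^ 2 = 1 + s ^ 2) (hh : 1 ≤ h)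
    (hv0 : 0 ≤ v) (hvh : v ≤ h - 1) : Qv s h v < 0 := by
  set x : ℝ := h - 1 with hxdef
  set w : ℝ := h - 1 - v with hwdef
  have hx : 0 ≤ x := by simp [hxdef]; linarith
  have hw : 0 ≤ w := by simp [hwdef]; linarith
  have hkey : Qv s h v = -72 - (72*v + 96*(w*v) + 12*(x^3*(w*v^2))
      + 240*x + 152*(x*w) + 144*(x*w^2) + 144*(x*w^3)
      + 480*x^2 + 640*(x^2*w) + 408*(x^2*w^2) + 216*(x^2*w^3)
      + 240*x^3 + 288*(x^3*w) + 120*(x^3*w^2) + 60*(x^3*w^3)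
      + 56*x^4 + 32*(x^4*w) + 16*x^5 + 4*(x^5*w)) := by
    rw [Qv, hxdef, hwdef]
    linear_combination (56 - 120*v^2 + 120*h*v - 72*h*v^3 + 192*h^2*v^2 - 184*h^3*v
      + 64*h^4 + 64*s^2 + 192*s^2*v^2 - 184*s^2*h*v + 64*s^2*h^2 + 64*s^4) * hh2
  have h1 : 0 ≤ w*v := mul_nonneg hw hv0
  have h2 : 0 ≤ x^3*(w*v^2) := mul_nonneg (pow_nonneg hx 3) (mul_nonneg hw (sq_nonneg v))
  have h3 : 0 ≤ x*w := mul_nonneg hx hw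
  have h4 : 0 ≤ x*w^2 := mul_nonneg hx (sq_nonneg w)
  have h5 : 0 ≤ x*w^3 := mul_nonneg hx (pow_nonneg hw 3)
  have h6 : 0 ≤ x^2*w := mul_nonneg (sq_nonneg x) hw
  have h7 : 0 ≤ x^2*w^2 := mul_nonneg (sq_nonneg x) (sq_nonneg w)
  have h8 : 0 ≤ x^2*w^3 := mul_nonneg (sq_nonneg x) (pow_nonneg hw 3)
  have h9 : 0 ≤ x^3*w := mul_nonneg (pow_nonneg hx 3) hw
  have h10 : 0 ≤ x^3*w^2 := mul_nonneg (pow_nonneg hx 3) (sq_nonneg w)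
  have h11 : 0 ≤ x^3*w^3 := mul_nonneg (pow_nonneg hx 3) (pow_nonneg hw 3)
  have h12 : 0 ≤ x^4*w := mul_nonneg (pow_nonneg hx 4) hw
  have h13 : 0 ≤ x^5*w := mul_nonneg (pow_nonneg hx 5) hw
  have h14 : 0 ≤ x^2 := sq_nonneg x
  have h15 : 0 ≤ x^3 := pow_nonneg hx 3
  have h16 : 0 ≤ x^4 := pow_nonneg hx 4
  have h17 : 0 ≤ x^5 := pow_nonneg hx 5
  linarith

/-- The key algebraic identity at a root of the dispersion relation. -/
lemma key_identity (α β k c m : ℝ) (hk : 0 < k)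
    (hroot : disp α β k = 0) (hEne : disp α β (2 * k) ≠ 0)
    (hc : c = -1 - k * (Real.cosh (2 * k) + 2) / disp α β (2 * k))
    (hm : m = -(9 * α * β + 16) * k + 12 * α * β * k * Real.cosh (2 * k)
        - 3 * α * β * k * Real.cosh (4 * k)
        + 8 * α * (2 * c - 1) * Real.sinh (2 * k)
        + 4 * α * (c + 2) * Real.sinh (4 * k)) :
    m * disp α β (2 * k) = 2 * k ^ 2 * Qv (Real.sinh k) (Real.cosh k) (β * k * Real.sinh k) := by
  set s : ℝ := Real.sinh k with hsdef
  set h : ℝ := Real.cosh k with hhdef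
  have hh2 : h ^ 2 = 1 + s ^ 2 := Real.cosh_sq' k
  have hroot' : (α + β * k ^ 2) * s = k * h := by
    have : (α + β * k ^ 2) * s - k * h = 0 := hroot
    linarith
  have hs2 : Real.sinh (2 * k) = 2 * s * h := Real.sinh_two_mul k
  have hc2 : Real.cosh (2 * k) = 2 * h ^ 2 - 1 := by
    rw [Real.cosh_two_mul]; linarith
  have hs4 : Real.sinh (4 * k) = 2 * (2 * s * h) * (2 * h ^ 2 - 1) := by
    rw [show (4 : ℝ) * k = 2 * (2 * k) by ring, Real.sinh_two_mul, hs2, hc2]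
  have hc4 : Real.cosh (4 * k) = 2 * (2 * h ^ 2 - 1) ^ 2 - 1 := by
    rw [show (4 : ℝ) * k = 2 * (2 * k) by ring, Real.cosh_two_mul, hs2, hc2]
    linear_combination (-4 * h ^ 2) * hh2
  have hE : disp α β (2 * k) = 2 * k * s * (3 * β * k * h - s) := by
    rw [disp, hs2, hc2]
    linear_combination 2 * h * hroot' + (-2 * k) * hh2
  have hEne' : 2 * k * s * (3 * β * k * h - s) ≠ 0 := hE ▸ hEne
  have hcE : c * (2 * k * s * (3 * β * k * h - s))
      = -(2 * k * s * (3 * β * k * h - s)) - k * (2 * h ^ 2 - 1 + 2) := by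
    rw [hc, hc2, hE]
    field_simp
    have hA : s * (k * h * 3 * β - s) ≠ 0 := by
      intro h0; apply hEne'; linear_combination (2 * k) * h0
    rw [mul_sub, mul_div_assoc', mul_div_cancel_left₀ _ hA]; ring
  rw [hm, hE, hs2, hc2, hs4, hc4, Qv]
  linear_combination (16 * α * s * h * (2 * h ^ 2 + 1)) * hcE
    + (-16*k*h - 64*k*h^3 - 64*k*h^5 + 128*k*s^2*h - 64*k*s^2*h^3
       + 48*β*k^2*s - 480*β*k^2*s*h^2 + 240*β*k^2*s*h^4
       - 144*β^2*k^3*h + 288*β^2*k^3*h^3 - 144*β^2*k^3*h^5) * hroot'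
    + (-144*k^2 - 128*k^2*h^2 - 64*k^2*h^4 - 128*k^2*s^2 - 128*k^2*s^2*h^2
       - 128*k^2*s^4 - 112*β*k^3*s*h + 304*β*k^3*s*h^3 + 368*β*k^3*s^3*h
       + 144*β^2*k^4*h^2 - 144*β^2*k^4*h^4 + 240*β^2*k^4*s^2
       - 384*β^2*k^4*s^2*h^2 - 384*β^2*k^4*s^4
       - 144*β^3*k^5*s*h + 144*β^3*k^5*s*h^3 + 144*β^3*k^5*s^3*h) * hh2

/-- At a positive root `k` of the dispersion relation (with `α > 1`, `β > 0`),
the quantity `Qv (sinh k) (cosh k) (βk sinh k)` is negative. -/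
lemma Qv_at_root_neg (α β k : ℝ) (hα : 1 < α) (hβ : 0 < β) (hk : 0 < k)
    (hroot : disp α β k = 0) :
    Qv (Real.sinh k) (Real.cosh k) (β * k * Real.sinh k) < 0 := by
  set s : ℝ := Real.sinh k with hsdef
  set h : ℝ := Real.cosh k with hhdef
  have hh2 : h ^ 2 = 1 + s ^ 2 := Real.cosh_sq' k
  have hs : 0 < s := Real.sinh_pos_iff.mpr hk
  have hks : k < s := Real.self_lt_sinh_iff.mpr hk
  have hh1 : 1 ≤ h := Real.one_le_cosh k
  have hroot' : (α + β * k ^ 2) * s = k * h := by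
    have : (α + β * k ^ 2) * s - k * h = 0 := hroot
    linarith
  have hv0 : 0 ≤ β * k * s := by positivity
  have hvh : β * k * s ≤ h - 1 := by
    have hkh : β * k ^ 2 * s = k * h - α * s := by linarith [hroot']
    nlinarith [mul_pos hβ (mul_pos hk hs)]
  exact Qv_neg s h (β * k * s) hh2 hh1 hv0 hvh

lemma sign_transfer (f : ℝ → ℝ) (hf : Continuous f) (a b : ℝ)
    (hroots : ∀ c ∈ Set.uIcc a b, f c ≠ 0) (hb : 0 < f b) : 0 < f a := by
  rcases lt_trichotomy (f a) 0 with h | h | h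
  · have h0 : (0 : ℝ) ∈ Set.uIcc (f a) (f b) := by
      rw [Set.mem_uIcc]; left; exact ⟨le_of_lt h, le_of_lt hb⟩
    obtain ⟨c, hc, hc0⟩ := intermediate_value_uIcc hf.continuousOn h0
    exact absurd hc0 (hroots c hc)
  · exact absurd h (hroots a Set.left_mem_uIcc)
  · exact h

/-- In Region II, with two positive simple roots `k₁ < k₂` and `2k₁ ≠ k₂`, the
coefficient `m̃₂₁⁽²⁾(k₂)` is negative, while `m̃₂₁⁽²⁾(k₁)` is negative iff `2k₁ > k₂`. -/
theorem stmt_12 (α β k₁ k₂ : ℝ) (hα : 1 < α) (hβ : 0 < β)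
    (hk₁ : 0 < k₁) (hlt : k₁ < k₂)
    (h1 : disp α β k₁ = 0) (h2 : disp α β k₂ = 0)
    (huniq : ∀ k : ℝ, 0 < k → disp α β k = 0 → k = k₁ ∨ k = k₂)
    (hd1 : deriv (disp α β) k₁ ≠ 0) (hd2 : deriv (disp α β) k₂ ≠ 0)
    (hne : 2 * k₁ ≠ k₂)
    (c₁ c₂ m₁ m₂ : ℝ)
    (hc₁ : c₁ = -1 - k₁ * (Real.cosh (2 * k₁) + 2) / disp α β (2 * k₁))
    (hc₂ : c₂ = -1 - k₂ * (Real.cosh (2 * k₂) + 2) / disp α β (2 * k₂))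
    (hm₁ : m₁ = -(9 * α * β + 16) * k₁ + 12 * α * β * k₁ * Real.cosh (2 * k₁)
        - 3 * α * β * k₁ * Real.cosh (4 * k₁)
        + 8 * α * (2 * c₁ - 1) * Real.sinh (2 * k₁)
        + 4 * α * (c₁ + 2) * Real.sinh (4 * k₁))
    (hm₂ : m₂ = -(9 * α * β + 16) * k₂ + 12 * α * β * k₂ * Real.cosh (2 * k₂)
        - 3 * α * β * k₂ * Real.cosh (4 * k₂)
        + 8 * α * (2 * c₂ - 1) * Real.sinh (2 * k₂)
        + 4 * α * (c₂ + 2) * Real.sinh (4 * k₂)) :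
    m₂ < 0 ∧ (k₂ < 2 * k₁ → m₁ < 0) ∧ (2 * k₁ < k₂ → 0 < m₁) := by
  have hk₂ : 0 < k₂ := lt_trans hk₁ hlt
  have cont : Continuous (disp α β) := by
    unfold disp
    continuity
  -- no roots off k₁, k₂
  have no_root : ∀ x : ℝ, 0 < x → x ≠ k₁ → x ≠ k₂ → disp α β x ≠ 0 := by
    intro x hx hx1 hx2 hx0
    rcases huniq x hx hx0 with h | h
    · exact hx1 h
    · exact hx2 h
  -- positivity for large arguments
  have pos_big : ∀ x : ℝ, max (k₂ + 1) (1 / β) ≤ x → 0 < disp α β x := by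
    intro x hx
    have hx1 : k₂ + 1 ≤ x := le_trans (le_max_left _ _) hx
    have hx2 : 1 / β ≤ x := le_trans (le_max_right _ _) hx
    have hx0 : 0 < x := by linarith
    have hbx : 1 ≤ β * x := by
      rw [div_le_iff₀ hβ] at hx2
      linarith [hx2]
    have hbx2 : x ≤ β * x ^ 2 := by nlinarith
    have hsx : x < Real.sinh x := Real.self_lt_sinh_iff.mpr hx0
    have hcs : Real.cosh x ≤ Real.sinh x + 1 := by
      have := Real.cosh_sub_sinh x
      have h2 : Real.exp (-x) ≤ 1 := Real.exp_le_one_iff.mpr (by linarith)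
      linarith
    rw [disp]
    nlinarith [Real.sinh_pos_iff.mpr hx0]
  -- a small positive point below k₁
  have pos_small : ∃ ε : ℝ, 0 < ε ∧ ε < k₁ ∧ 0 < disp α β ε := by
    have hD0 : disp α β 0 = 0 := by simp [disp]
    have hder : HasDerivAt (disp α β) (α - 1) 0 := by
      have ha : HasDerivAt (fun x : ℝ => α + β * x ^ 2) (β * (2 * 0 ^ 1)) 0 :=
        ((hasDerivAt_pow 2 (0 : ℝ)).const_mul β).const_add α
      have hb' : HasDerivAt (fun x : ℝ => (α + β * x ^ 2) * Real.sinh x)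
          ((β * (2 * 0 ^ 1)) * Real.sinh 0 + (α + β * 0 ^ 2) * Real.cosh 0) 0 :=
        ha.mul (Real.hasDerivAt_sinh 0)
      have hcc : HasDerivAt (fun x : ℝ => x * Real.cosh x)
          (1 * Real.cosh 0 + 0 * Real.sinh 0) 0 :=
        (hasDerivAt_id 0).mul (Real.hasDerivAt_cosh 0)
      have := hb'.sub hcc
      simp only [Real.sinh_zero, Real.cosh_zero] at this
      rw [show (α - 1) = β * (2 * 0 ^ 1) * 0 + (α + β * 0 ^ 2) * 1 - (1 * 1 + 0 * 0) by ring]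
      exact this
    rw [hasDerivAt_iff_tendsto_slope] at hder
    have hpos : ∀ᶠ x in nhdsWithin 0 {(0:ℝ)}ᶜ, 0 < slope (disp α β) 0 x :=
      hder.eventually (eventually_gt_nhds (by linarith))
    have hmono : nhdsWithin (0:ℝ) (Set.Ioi 0) ≤ nhdsWithin 0 {(0:ℝ)}ᶜ :=
      nhdsWithin_mono 0 (fun x hx => ne_of_gt hx)
    have hpos' : ∀ᶠ x in nhdsWithin (0:ℝ) (Set.Ioi 0), 0 < slope (disp α β) 0 x :=
      hpos.filter_mono hmono
    have hioo : ∀ᶠ x in nhdsWithin (0:ℝ) (Set.Ioi 0), x ∈ Set.Ioo (0:ℝ) k₁ :=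
      Ioo_mem_nhdsGT_of_mem (by constructor <;> [exact le_refl 0; exact hk₁])
    obtain ⟨ε, hslope, hmem⟩ := (hpos'.and hioo).exists
    refine ⟨ε, hmem.1, hmem.2, ?_⟩
    have : slope (disp α β) 0 ε = disp α β ε / ε := by
      rw [slope_def_field, hD0]
      simp [div_eq_div_iff]
    rw [this] at hslope
    have := mul_pos hslope hmem.1
    rw [div_mul_cancel₀] at this
    · exact this
    · exact ne_of_gt hmem.1
  obtain ⟨ε, hε0, hεk, hεpos⟩ := pos_small
  -- positivity on (k₂, ∞)
  have pos_after : ∀ x : ℝ, k₂ < x → 0 < disp α β x := by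
    intro x hx
    set K : ℝ := max x (max (k₂ + 1) (1 / β)) with hK
    have hKx : k₂ < K := lt_of_lt_of_le hx (le_max_left _ _)
    apply sign_transfer (disp α β) cont x K
    · intro c hc
      have hc' : min x K ≤ c ∧ c ≤ max x K := by
        rw [Set.mem_uIcc] at hc
        rcases hc with ⟨h1', h2'⟩ | ⟨h1', h2'⟩
        · constructor
          · exact le_trans (min_le_left _ _) h1'
          · exact le_trans h2' (le_max_right _ _)
        · constructor
          · exact le_trans (min_le_right _ _) h1'
          · exact le_trans h2' (le_max_left _ _)
      have hck : k₂ < c := lt_of_lt_of_le (lt_min hx hKx) hc'.1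
      exact no_root c (lt_trans hk₂ hck) (ne_of_gt (lt_trans hlt hck)) (ne_of_gt hck)
    · exact pos_big K (le_max_right _ _)
  -- sign on (k₁, k₂): negative
  have neg_mid : ∀ x : ℝ, k₁ < x → x < k₂ → disp α β x < 0 := by
    set y₀ : ℝ := (k₁ + k₂) / 2 with hy₀
    have hy₁ : k₁ < y₀ := by rw [hy₀]; linarith
    have hy₂ : y₀ < k₂ := by rw [hy₀]; linarith
    have hy0 : 0 < y₀ := lt_trans hk₁ hy₁
    have hyne : disp α β y₀ ≠ 0 := no_root y₀ hy0 (ne_of_gt hy₁) (ne_of_lt hy₂)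
    have no_root_mid : ∀ c : ℝ, k₁ < c → c < k₂ → disp α β c ≠ 0 := fun c hc1 hc2 =>
      no_root c (lt_trans hk₁ hc1) (ne_of_gt hc1) (ne_of_lt hc2)
    have no_root_left : ∀ c : ℝ, 0 < c → c < k₁ → disp α β c ≠ 0 := fun c hc1 hc2 =>
      no_root c hc1 (ne_of_lt hc2) (ne_of_lt (lt_trans hc2 hlt))
    -- transfer within open intervals
    have transfer_mid : 0 < disp α β y₀ → ∀ x : ℝ, k₁ < x → x < k₂ → 0 < disp α β x := by
      intro hy x hx1 hx2
      apply sign_transfer (disp α β) cont x y₀ _ hy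
      intro c hc
      rw [Set.mem_uIcc] at hc
      apply no_root_mid c
      · rcases hc with ⟨hl, _⟩ | ⟨hl, _⟩
        · exact lt_of_lt_of_le hx1 hl
        · exact lt_of_lt_of_le hy₁ hl
      · rcases hc with ⟨_, hr⟩ | ⟨_, hr⟩
        · exact lt_of_le_of_lt hr hy₂
        · exact lt_of_le_of_lt hr hx2
    rcases lt_trichotomy (disp α β y₀) 0 with hy | hy | hy
    · -- negative at midpoint: transfer negativity
      intro x hx1 hx2
      have hneg : 0 < (fun t => -(disp α β t)) x := by
        apply sign_transfer (fun t => -(disp α β t)) cont.neg x y₀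
        · intro c hc
          rw [Set.mem_uIcc] at hc
          simp only [ne_eq, neg_eq_zero]
          apply no_root_mid c
          · rcases hc with ⟨hl, _⟩ | ⟨hl, _⟩
            · exact lt_of_lt_of_le hx1 hl
            · exact lt_of_lt_of_le hy₁ hl
          · rcases hc with ⟨_, hr⟩ | ⟨_, hr⟩
            · exact lt_of_le_of_lt hr hy₂
            · exact lt_of_le_of_lt hr hx2
        · show 0 < -(disp α β y₀)
          linarith
      have hneg' : 0 < -(disp α β x) := hneg
      linarith
    · exact absurd hy hyne
    · -- positive at midpoint: contradiction with simplicity at k₁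
      exfalso
      have pos_left : ∀ x : ℝ, 0 < x → x < k₁ → 0 < disp α β x := by
        intro x hx1 hx2
        apply sign_transfer (disp α β) cont x ε _ hεpos
        intro c hc
        rw [Set.mem_uIcc] at hc
        apply no_root_left c
        · rcases hc with ⟨hl, _⟩ | ⟨hl, _⟩
          · exact lt_of_lt_of_le hx1 hl
          · exact lt_of_lt_of_le hε0 hl
        · rcases hc with ⟨_, hr⟩ | ⟨_, hr⟩
          · exact lt_of_le_of_lt hr hεk
          · exact lt_of_le_of_lt hr hx2
      have hmin : IsLocalMin (disp α β) k₁ := by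
        have hnb : Set.Ioo (0:ℝ) k₂ ∈ nhds k₁ := isOpen_Ioo.mem_nhds ⟨hk₁, hlt⟩
        filter_upwards [hnb] with x hx
        rcases lt_trichotomy x k₁ with hxx | hxx | hxx
        · rw [h1]; exact le_of_lt (pos_left x hx.1 hxx)
        · rw [hxx]
        · rw [h1]; exact le_of_lt (transfer_mid hy x hxx hx.2)
      exact hd1 hmin.deriv_eq_zero
  -- now the sign of disp at 2k₁ and 2k₂
  have hE₂pos : 0 < disp α β (2 * k₂) := pos_after (2 * k₂) (by linarith)
  have hE₂ne : disp α β (2 * k₂) ≠ 0 := ne_of_gt hE₂pos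
  have hQ₂ : Qv (Real.sinh k₂) (Real.cosh k₂) (β * k₂ * Real.sinh k₂) < 0 :=
    Qv_at_root_neg α β k₂ hα hβ hk₂ h2
  have hkey₂ := key_identity α β k₂ c₂ m₂ hk₂ h2 hE₂ne hc₂ hm₂
  have hm₂neg : m₂ < 0 := by
    have hprod : m₂ * disp α β (2 * k₂) < 0 := by
      rw [hkey₂]
      exact mul_neg_of_pos_of_neg (mul_pos (by norm_num) (pow_pos hk₂ 2)) hQ₂
    by_contra hcon
    push_neg at hcon
    exact absurd hprod (not_lt.mpr (mul_nonneg hcon hE₂pos.le))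
  refine ⟨hm₂neg, ?_, ?_⟩
  · -- k₂ < 2k₁ : disp(2k₁) > 0, m₁ < 0
    intro hcase
    have hE₁pos : 0 < disp α β (2 * k₁) := pos_after (2 * k₁) hcase
    have hE₁ne : disp α β (2 * k₁) ≠ 0 := ne_of_gt hE₁pos
    have hQ₁ : Qv (Real.sinh k₁) (Real.cosh k₁) (β * k₁ * Real.sinh k₁) < 0 :=
      Qv_at_root_neg α β k₁ hα hβ hk₁ h1
    have hkey₁ := key_identity α β k₁ c₁ m₁ hk₁ h1 hE₁ne hc₁ hm₁
    have hprod : m₁ * disp α β (2 * k₁) < 0 := by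
      rw [hkey₁]
      exact mul_neg_of_pos_of_neg (mul_pos (by norm_num) (pow_pos hk₁ 2)) hQ₁
    by_contra hcon
    push_neg at hcon
    exact absurd hprod (not_lt.mpr (mul_nonneg hcon hE₁pos.le))
  · -- 2k₁ < k₂ : disp(2k₁) < 0, m₁ > 0
    intro hcase
    have hE₁neg : disp α β (2 * k₁) < 0 := neg_mid (2 * k₁) (by linarith) hcase
    have hE₁ne : disp α β (2 * k₁) ≠ 0 := ne_of_lt hE₁neg
    have hQ₁ : Qv (Real.sinh k₁) (Real.cosh k₁) (β * k₁ * Real.sinh k₁) < 0 :=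
      Qv_at_root_neg α β k₁ hα hβ hk₁ h1
    have hkey₁ := key_identity α β k₁ c₁ m₁ hk₁ h1 hE₁ne hc₁ hm₁
    have hprod : m₁ * disp α β (2 * k₁) < 0 := by
      rw [hkey₁]
      exact mul_neg_of_pos_of_neg (mul_pos (by norm_num) (pow_pos hk₁ 2)) hQ₁
    by_contra hcon
    push_neg at hcon
    have hnn := mul_nonneg (neg_nonneg.mpr hcon) (neg_nonneg.mpr hE₁neg.le)
    rw [neg_mul_neg] at hnn
    exact absurd hprod (not_lt.mpr hnn)
end

section
/- Let α ∈ (0,1), β > 0, and let k⋆ > 0 be the unique positive root of 𝒟(k) = (α + βk²)·sinh(k) − k·cosh(k). Then the coefficient c(k⋆) = −1 − k⋆·(cosh(2k⋆) + 2)/𝒟(2k⋆) is well defined and satisfies c(k⋆) < −1. -/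
/-- In Region I, with `k⋆` the unique positive root, the coefficient
`c(k⋆) = −1 − k⋆(cosh(2k⋆) + 2)/𝒟(2k⋆)` is well defined and satisfies `c(k⋆) < −1`. -/
theorem stmt_13 (α β kstar : ℝ) (hα0 : 0 < α) (hα1 : α < 1) (hβ : 0 < β)
    (hk : 0 < kstar) (hroot : disp α β kstar = 0)
    (huniq : ∀ k : ℝ, 0 < k → disp α β k = 0 → k = kstar) :
    disp α β (2 * kstar) ≠ 0 ∧
      -1 - kstar * (Real.cosh (2 * kstar) + 2) / disp α β (2 * kstar) < -1 := by
  have hcont : Continuous (disp α β) := by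
    unfold disp; continuity
  have hne : disp α β (2 * kstar) ≠ 0 := by
    intro h
    have := huniq (2 * kstar) (by linarith) h
    linarith
  -- choose a large point K where disp is positive
  set K : ℝ := 2 * kstar + 2 / β + 1 with hK
  have hβinv : 0 < 2 / β := by positivity
  have hK1 : 1 ≤ K := by rw [hK]; linarith
  have hK2k : 2 * kstar < K := by rw [hK]; linarith
  have hKβ : 2 / β ≤ K := by rw [hK]; linarith
  have hKpos : 0 < K := by linarith
  have hsinh : 0 < Real.sinh K := Real.sinh_pos_iff.mpr hKpos
  have hcosh2 : Real.cosh K < 2 * Real.sinh K := by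
    rw [Real.cosh_eq, Real.sinh_eq]
    have h1 : Real.exp 2 ≤ Real.exp (2 * K) := Real.exp_le_exp.mpr (by linarith)
    have h2 : (3 : ℝ) < Real.exp 2 := by
      have := Real.add_one_lt_exp (x := 2) (by norm_num)
      linarith
    have h3 : Real.exp (-K) * Real.exp (2 * K) = Real.exp K := by
      rw [← Real.exp_add]; ring_nf
    have h4 : 3 * Real.exp (-K) < Real.exp K := by
      have he : 0 < Real.exp (-K) := Real.exp_pos _
      nlinarith
    linarith
  have hDK : 0 < disp α β K := by
    unfold disp
    have h1 : 2 * K ≤ β * K ^ 2 := by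
      have : 2 / β ≤ K := hKβ
      have h := mul_le_mul_of_nonneg_right this (le_of_lt hKpos)
      rw [div_mul_eq_mul_div, div_le_iff₀ hβ] at h
      nlinarith
    nlinarith [Real.sinh_pos_iff.mpr hKpos, hα0]
  have hDpos : 0 < disp α β (2 * kstar) := by
    rcases lt_or_gt_of_ne hne with hneg | hpos
    · exfalso
      -- IVT gives a root in [2k⋆, K]
      have hIcc : (0 : ℝ) ∈ Set.Icc (disp α β (2 * kstar)) (disp α β K) :=
        ⟨le_of_lt hneg, le_of_lt hDK⟩
      have := intermediate_value_Icc (le_of_lt hK2k) (hcont.continuousOn)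
      obtain ⟨c, hc, hc0⟩ := this hIcc
      have hcpos : 0 < c := by
        have := hc.1; linarith
      have := huniq c hcpos hc0
      have := hc.1
      linarith
    · exact hpos
  refine ⟨hne, ?_⟩
  have hnum : 0 < kstar * (Real.cosh (2 * kstar) + 2) := by
    have := Real.cosh_pos (x := 2 * kstar)
    nlinarith
  have : 0 < kstar * (Real.cosh (2 * kstar) + 2) / disp α β (2 * kstar) :=
    div_pos hnum hDpos
  linarith
end

section
/- (Fredholm solvability condition.) Let α, β be real and k⋆ > 0 with 𝒟(k⋆) = 0, where 𝒟(k) = (α + βk²)·sinh(k) − k·cosh(k). Let F₃ : [0,1] → ℝ be continuous, let f₃, g₃, η₃₁ be real numbers, and let φ₃₁ : [0,1] → ℝ be twice continuously differentiable with: −k⋆²·φ₃₁(y) + φ₃₁″(y) = F₃(y) for y ∈ (0,1), (α + βk⋆²)·η₃₁ − k⋆·φ₃₁(1) = g₃, φ₃₁′(0) = 0, and φ₃₁′(1) − k⋆·η₃₁ = f₃. Then f₃·cosh(k⋆) + g₃·sinh(k⋆) = ∫₀¹ F₃(y)·cosh(k⋆y) dy. -/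
/-- Fredholm solvability condition for the third-order system: if `φ₃₁` solves the
nonhomogeneous boundary value problem, then
`f₃ cosh k⋆ + g₃ sinh k⋆ = ∫₀¹ F₃(y) cosh(k⋆ y) dy`. -/
theorem stmt_16 (α β kstar : ℝ) (hk : 0 < kstar) (hroot : disp α β kstar = 0)
    (F₃ : ℝ → ℝ) (hF₃ : ContinuousOn F₃ (Set.Icc 0 1))
    (f₃ g₃ η₃₁ : ℝ) (φ₃₁ : ℝ → ℝ)
    (hφ : ContDiffOn ℝ 2 φ₃₁ (Set.Icc 0 1))
    (hode : ∀ y ∈ Set.Ioo (0 : ℝ) 1,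
        -kstar ^ 2 * φ₃₁ y
          + derivWithin (derivWithin φ₃₁ (Set.Icc 0 1)) (Set.Icc 0 1) y = F₃ y)
    (halg : (α + β * kstar ^ 2) * η₃₁ - kstar * φ₃₁ 1 = g₃)
    (hbc0 : derivWithin φ₃₁ (Set.Icc 0 1) 0 = 0)
    (hbc1 : derivWithin φ₃₁ (Set.Icc 0 1) 1 - kstar * η₃₁ = f₃) :
    f₃ * Real.cosh kstar + g₃ * Real.sinh kstar
      = ∫ y in (0 : ℝ)..1, F₃ y * Real.cosh (kstar * y) := by
  set s : Set ℝ := Set.Icc 0 1 with hs_def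
  have hs : UniqueDiffOn ℝ s := uniqueDiffOn_Icc one_pos
  set g : ℝ → ℝ := derivWithin φ₃₁ s with hg_def
  have hg : ContDiffOn ℝ 1 g s := hφ.derivWithin hs (by norm_num)
  have hgc : ContinuousOn g s := hg.continuousOn
  have hφc : ContinuousOn φ₃₁ s := hφ.continuousOn
  -- the combination W
  set W : ℝ → ℝ := fun y => g y * Real.cosh (kstar * y)
      - kstar * φ₃₁ y * Real.sinh (kstar * y) with hW_def
  have hWc : ContinuousOn W s := by
    apply ContinuousOn.sub
    · exact hgc.mul (Real.continuous_cosh.comp (continuous_const.mul continuous_id)).continuousOn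
    · exact (continuousOn_const.mul hφc).mul
        (Real.continuous_sinh.comp (continuous_const.mul continuous_id)).continuousOn
  have hWd : ∀ y ∈ Set.Ioo (0 : ℝ) 1, HasDerivAt W (F₃ y * Real.cosh (kstar * y)) y := by
    intro y hy
    have hmem : s ∈ nhds y := Icc_mem_nhds hy.1 hy.2
    have hφd : HasDerivAt φ₃₁ (g y) y := by
      have := ((hφ.differentiableOn (by norm_num)) y (Set.Ioo_subset_Icc_self hy)).hasDerivWithinAt
      exact this.hasDerivAt hmem
    have hgd : HasDerivAt g (derivWithin g s y) y := by
      have := ((hg.differentiableOn (by norm_num)) y (Set.Ioo_subset_Icc_self hy)).hasDerivWithinAt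
      exact this.hasDerivAt hmem
    have hc : HasDerivAt (fun z => Real.cosh (kstar * z)) (kstar * Real.sinh (kstar * y)) y := by
      have : HasDerivAt (fun z => kstar * z) kstar y := by
        simpa using (hasDerivAt_id y).const_mul kstar
      simpa [mul_comm] using this.cosh
    have hsi : HasDerivAt (fun z => Real.sinh (kstar * z)) (kstar * Real.cosh (kstar * y)) y := by
      have : HasDerivAt (fun z => kstar * z) kstar y := by
        simpa using (hasDerivAt_id y).const_mul kstar
      simpa [mul_comm] using this.sinh
    have h1 : HasDerivAt (fun z => g z * Real.cosh (kstar * z))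
        (derivWithin g s y * Real.cosh (kstar * y) + g y * (kstar * Real.sinh (kstar * y))) y :=
      hgd.mul hc
    have h2 : HasDerivAt (fun z => kstar * φ₃₁ z * Real.sinh (kstar * z))
        (kstar * g y * Real.sinh (kstar * y)
          + kstar * φ₃₁ y * (kstar * Real.cosh (kstar * y))) y :=
      (hφd.const_mul kstar).mul hsi
    have := h1.sub h2
    have hF := hode y hy
    refine HasDerivAt.congr_deriv this ?_
    ring_nf
    nlinarith [hF, Real.cosh_pos (kstar * y)]
  have hint : IntervalIntegrable (fun y => F₃ y * Real.cosh (kstar * y)) MeasureTheory.volume 0 1 := by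
    apply ContinuousOn.intervalIntegrable
    rw [Set.uIcc_of_le (by norm_num : (0:ℝ) ≤ 1)]
    exact hF₃.mul (Real.continuous_cosh.comp (continuous_const.mul continuous_id)).continuousOn
  have hFTC := intervalIntegral.integral_eq_sub_of_hasDerivAt_of_le (by norm_num : (0:ℝ) ≤ 1)
    hWc hWd hint
  rw [hFTC]
  have hW0 : W 0 = 0 := by simp [hW_def, hbc0]
  have hW1 : W 1 = g 1 * Real.cosh kstar - kstar * φ₃₁ 1 * Real.sinh kstar := by
    simp [hW_def]
  rw [hW1, hW0]
  have hg1 : g 1 = f₃ + kstar * η₃₁ := by rw [hg_def]; linarith [hbc1]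
  have hdisp : (α + β * kstar ^ 2) * Real.sinh kstar - kstar * Real.cosh kstar = 0 := hroot
  rw [hg1]
  linear_combination -Real.sinh kstar * halg + η₃₁ * hdisp
end

section
/- Let α > 0, β > 0 and k⋆ > 0 satisfy 𝒟(k⋆) = 0 and 𝒟(2k⋆) ≠ 0, where 𝒟(k) = (α + βk²)·sinh(k) − k·cosh(k). Set σ = tanh(k⋆), T̃ = βk⋆²/α, c = −1 − k⋆(cosh(2k⋆) + 2)/𝒟(2k⋆), m̃₂₁⁽²⁾ = −(9αβ + 16)k⋆ + 12αβk⋆·cosh(2k⋆) − 3αβk⋆·cosh(4k⋆) + 8α(2c − 1)·sinh(2k⋆) + 4α(c + 2)·sinh(4k⋆), and let χ = (1/(4√(σ(1 + T̃))))·[ ((1 − σ²)(9 − σ²) + T̃(3 − σ²)(7 − σ²))/(σ² − T̃(3 − σ²)) + 8σ² − 2(1 − σ²)²(1 + T̃) − 3σ²T̃/(1 + T̃) ]. Then σ² − T̃(3 − σ²) ≠ 0 and m̃₂₁⁽²⁾ = (32·k⋆·√(σ(1 + T̃))/((1 + T̃)(1 − σ²)²))·χ; in particular m̃₂₁⁽²⁾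 and the Davey–Stewartson coefficient χ have the same sign. -/
set_option maxHeartbeats 2000000 in
/-- The coefficient `m̃₂₁⁽²⁾` is a positive multiple of the Davey–Stewartson cubic
coefficient `χ`; in particular they have the same sign. -/
theorem stmt_19 (α β kstar : ℝ) (hα : 0 < α) (hβ : 0 < β) (hk : 0 < kstar)
    (hroot : disp α β kstar = 0) (h2k : disp α β (2 * kstar) ≠ 0)
    (σ T c m χ : ℝ)
    (hσ : σ = Real.tanh kstar) (hT : T = β * kstar ^ 2 / α)
    (hc : c = -1 - kstar * (Real.cosh (2 * kstar) + 2) / disp α β (2 * kstar))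
    (hm : m = -(9 * α * β + 16) * kstar + 12 * α * β * kstar * Real.cosh (2 * kstar)
        - 3 * α * β * kstar * Real.cosh (4 * kstar)
        + 8 * α * (2 * c - 1) * Real.sinh (2 * kstar)
        + 4 * α * (c + 2) * Real.sinh (4 * kstar))
    (hχ : χ = 1 / (4 * Real.sqrt (σ * (1 + T))) *
        (((1 - σ ^ 2) * (9 - σ ^ 2) + T * (3 - σ ^ 2) * (7 - σ ^ 2)) /
            (σ ^ 2 - T * (3 - σ ^ 2))
          + 8 * σ ^ 2 - 2 * (1 - σ ^ 2) ^ 2 * (1 + T) - 3 * σ ^ 2 * T / (1 + T))) :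
    σ ^ 2 - T * (3 - σ ^ 2) ≠ 0 ∧
    m = 32 * kstar * Real.sqrt (σ * (1 + T)) / ((1 + T) * (1 - σ ^ 2) ^ 2) * χ ∧
    ((0 < m ↔ 0 < χ) ∧ (m < 0 ↔ χ < 0)) := by
  have hco : 0 < Real.cosh kstar := Real.cosh_pos kstar
  have hs : 0 < Real.sinh kstar := Real.sinh_pos_iff.mpr hk
  have hσs : σ = Real.sinh kstar / Real.cosh kstar := by
    rw [hσ, Real.tanh_eq_sinh_div_cosh]
  have hσ0 : 0 < σ := by rw [hσs]; positivity
  have hσ1 : σ < 1 := by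
    rw [hσs, div_lt_one hco]; exact Real.sinh_lt_cosh kstar
  have hσne : σ ≠ 0 := ne_of_gt hσ0
  have h1mσ : (0:ℝ) < 1 - σ ^ 2 := by nlinarith
  have h1mσne : (1:ℝ) - σ ^ 2 ≠ 0 := ne_of_gt h1mσ
  have hT0 : 0 < T := by rw [hT]; positivity
  have h1T : (0:ℝ) < 1 + T := by linarith
  have h1Tne : (1:ℝ) + T ≠ 0 := ne_of_gt h1T
  have hkne : kstar ≠ 0 := ne_of_gt hk
  have hαne : α ≠ 0 := ne_of_gt hα
  have hcone : Real.cosh kstar ≠ 0 := ne_of_gt hco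
  have hpy : Real.cosh kstar ^ 2 - Real.sinh kstar ^ 2 = 1 :=
    Real.cosh_sq_sub_sinh_sq kstar
  have hs_eq : Real.sinh kstar = σ * Real.cosh kstar := by
    rw [hσs]; field_simp
  have hco2' : (1 - σ ^ 2) * Real.cosh kstar ^ 2 = 1 := by
    linear_combination hpy + (Real.sinh kstar + σ * Real.cosh kstar) * hs_eq
  have hc2k : Real.cosh (2 * kstar) = (1 + σ ^ 2) / (1 - σ ^ 2) := by
    rw [Real.cosh_two_mul, hs_eq, eq_div_iff h1mσne]
    linear_combination (1 + σ ^ 2) * hco2'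
  have hs2k : Real.sinh (2 * kstar) = 2 * σ / (1 - σ ^ 2) := by
    rw [Real.sinh_two_mul, hs_eq, eq_div_iff h1mσne]
    linear_combination (2 * σ) * hco2'
  have h4 : (4:ℝ) * kstar = 2 * (2 * kstar) := by ring
  have hc4k : Real.cosh (4 * kstar) = (1 + 6 * σ ^ 2 + σ ^ 4) / (1 - σ ^ 2) ^ 2 := by
    rw [h4, Real.cosh_two_mul, hc2k, hs2k]
    field_simp
    ring
  have hs4k : Real.sinh (4 * kstar) = 4 * σ * (1 + σ ^ 2) / (1 - σ ^ 2) ^ 2 := by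
    rw [h4, Real.sinh_two_mul, hs2k, hc2k]
    field_simp
    ring
  have hroot' : (α + β * kstar ^ 2) * Real.sinh kstar = kstar * Real.cosh kstar := by
    unfold disp at hroot; linarith
  have hkey : α * (1 + T) * σ = kstar := by
    rw [hT, hσs]
    field_simp
    nlinarith [hroot']
  have hαval : α = kstar / (σ * (1 + T)) := by
    rw [eq_div_iff (by positivity)]
    linarith [hkey]
  have hβval : β = α * T / kstar ^ 2 := by
    rw [hT]; field_simp
  have hD2 : disp α β (2 * kstar)
      = -2 * kstar * (σ ^ 2 - T * (3 - σ ^ 2)) / ((1 + T) * (1 - σ ^ 2)) := by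
    unfold disp
    rw [hs2k, hc2k, hβval, hαval]
    field_simp
    ring
  have hden : σ ^ 2 - T * (3 - σ ^ 2) ≠ 0 := by
    intro h
    apply h2k
    rw [hD2, h]
    simp
  have hXpos : 0 < σ * (1 + T) := by positivity
  have hsqpos : 0 < Real.sqrt (σ * (1 + T)) := Real.sqrt_pos.mpr hXpos
  have hsqne : Real.sqrt (σ * (1 + T)) ≠ 0 := ne_of_gt hsqpos
  have hmain : m = 32 * kstar * Real.sqrt (σ * (1 + T)) / ((1 + T) * (1 - σ ^ 2) ^ 2) * χ := by
    rw [hm, hc, hD2, hχ, hc2k, hc4k, hs2k, hs4k, hβval, hαval]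
    field_simp
    ring
  refine ⟨hden, hmain, ?_, ?_⟩
  · have hC : 0 < 32 * kstar * Real.sqrt (σ * (1 + T)) / ((1 + T) * (1 - σ ^ 2) ^ 2) := by
      positivity
    rw [hmain]
    constructor
    · intro h
      rcases mul_pos_iff.mp h with ⟨_, h2⟩ | ⟨h1, _⟩
      · exact h2
      · linarith
    · exact fun h => mul_pos hC h
  · have hC : 0 < 32 * kstar * Real.sqrt (σ * (1 + T)) / ((1 + T) * (1 - σ ^ 2) ^ 2) := by
      positivity
    rw [hmain]
    constructor
    · intro h
      rcases mul_neg_iff.mp h with ⟨_, h2⟩ | ⟨h1, _⟩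
      · exact h2
      · linarith
    · exact fun h => mul_neg_of_pos_of_neg hC h
end
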